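/- arXiv:1207.5815 — 7 statements merged into one kernel-verified Lean document; each statement's English description precedes it below -/
import Mathlib

section
/- Let n ≥ 1, let (X_i, d_i) for i = 1,…,n be nonempty complete metric spaces, and equip X = Π_{i=1}^n X_i with the sup metric. Let φ_i : X_i → X_i satisfy d(φ_i(u), φ_i(v)) ≤ L_i·d(u,v) for all u, v ∈ X_i, where L_i ≥ 0, and let F : X → X satisfy d(F(x)_j, F(y)_j) ≤ Σ_{i=1}^n Λ_{ij}·d(x_i, y_i) for all x, y ∈ X and all j, where Λ is a nonnegative n×n real matrix. Let A be the n×n matrix with entries A_{ji} = Λ_{ij}·L_i (that is, A = Λᵀ·diag(L₁,…,L_n)). If ρ(A) < 1, then the map ℱ : X → X defined by ℱ(x) = F(φ₁(x₁),…,φ_n(x_n)) has a globally attracting fixed point. -/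
open Filter
open scoped ENNReal NNReal

/-- The spectral radius of a real square matrix: the supremum of the absolute values
of its complex eigenvalues. -/
noncomputable def specRad {n : ℕ} (A : Matrix (Fin n) (Fin n) ℝ) : ℝ :=
  sSup ((fun μ : ℂ => ‖μ‖) '' spectrum ℂ (A.map (fun x => (x : ℂ))))

lemma euclid_coord_le_norm {n : ℕ} (x : EuclideanSpace ℂ (Fin n)) (j : Fin n) :
    ‖x j‖ ≤ ‖x‖ := by
  rw [EuclideanSpace.norm_eq]
  have h1 : ‖x j‖ ^ 2 ≤ ∑ i, ‖x i‖ ^ 2 :=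
    Finset.single_le_sum (f := fun i => ‖x i‖ ^ 2) (fun i _ => sq_nonneg _) (Finset.mem_univ j)
  calc ‖x j‖ = Real.sqrt (‖x j‖ ^ 2) := (Real.sqrt_sq (norm_nonneg _)).symm
  _ ≤ _ := Real.sqrt_le_sqrt h1

lemma entry_le_clm_norm {n : ℕ} (M : Matrix (Fin n) (Fin n) ℂ) (j i : Fin n) :
    ‖M j i‖ ≤ ‖Matrix.toEuclideanCLM (𝕜 := ℂ) M‖ := by
  classical
  set T := Matrix.toEuclideanCLM (𝕜 := ℂ) M with hT
  have hx : ‖(EuclideanSpace.single i (1 : ℂ))‖ = 1 := by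
    rw [EuclideanSpace.norm_single]; simp
  have happ : (T (EuclideanSpace.single i (1 : ℂ))) j = M j i := by
    rw [hT]
    show (Matrix.toEuclideanCLM (𝕜 := ℂ) M (WithLp.toLp 2 (Pi.single i 1))) j = M j i
    rw [Matrix.toEuclideanCLM_toLp]
    simp [Matrix.mulVec_single]
  have hle := T.le_opNorm (EuclideanSpace.single i (1 : ℂ))
  rw [hx, mul_one] at hle
  calc ‖M j i‖ = ‖(T (EuclideanSpace.single i (1 : ℂ))) j‖ := by rw [happ]
  _ ≤ ‖T (EuclideanSpace.single i (1 : ℂ))‖ := euclid_coord_le_norm _ _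
  _ ≤ ‖T‖ := hle

lemma matrix_pow_entry_bound {n : ℕ} (hn : 1 ≤ n) (A : Matrix (Fin n) (Fin n) ℝ)
    (hρ : specRad A < 1) :
    ∃ r C : ℝ, 0 < r ∧ r < 1 ∧ 0 < C ∧ ∀ k, ∀ j i : Fin n, |(A ^ k) j i| ≤ C * r ^ k := by
  classical
  haveI : Nonempty (Fin n) := Fin.pos_iff_nonempty.mp hn
  haveI : Nontrivial (EuclideanSpace ℂ (Fin n)) := by
    refine nontrivial_of_ne (EuclideanSpace.single (Classical.arbitrary (Fin n)) (1 : ℂ)) 0 ?_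
    intro h
    have := congrArg norm h
    rw [EuclideanSpace.norm_single] at this
    simp at this
  set M : Matrix (Fin n) (Fin n) ℂ := A.map (fun x => (x : ℂ)) with hM
  set T : EuclideanSpace ℂ (Fin n) →L[ℂ] EuclideanSpace ℂ (Fin n) :=
    Matrix.toEuclideanCLM (𝕜 := ℂ) M with hT
  have hspec : spectrum ℂ T = spectrum ℂ M :=
    AlgEquiv.spectrum_eq (Matrix.toEuclideanCLM (𝕜 := ℂ) (n := Fin n)) M
  have hcpt : IsCompact (spectrum ℂ M) := hspec ▸ spectrum.isCompact T
  have hbdd : BddAbove ((fun μ : ℂ => ‖μ‖) '' spectrum ℂ M) :=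
    (hcpt.image continuous_norm).bddAbove
  have hne : (spectrum ℂ M).Nonempty := hspec ▸ spectrum.nonempty T
  have h0 : 0 ≤ specRad A := by
    obtain ⟨μ, hμ⟩ := hne
    exact le_trans (norm_nonneg μ) (le_csSup hbdd ⟨μ, hμ, rfl⟩)
  set r : ℝ := (specRad A + 1) / 2 with hr
  have hr0 : 0 < r := by rw [hr]; linarith
  have hr1 : r < 1 := by rw [hr]; linarith
  have hρr : specRad A < r := by rw [hr]; linarith
  have hsr : spectralRadius ℂ T < ENNReal.ofReal r := by
    have hle : spectralRadius ℂ T ≤ ENNReal.ofReal (specRad A) := by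
      refine iSup₂_le fun μ hμ => ?_
      have habs : ‖μ‖ ≤ specRad A := le_csSup hbdd ⟨μ, hspec ▸ hμ, rfl⟩
      rw [← ENNReal.ofReal_coe_nnreal, coe_nnnorm]
      exact ENNReal.ofReal_le_ofReal (by simpa using habs)
    exact hle.trans_lt ((ENNReal.ofReal_lt_ofReal_iff hr0).mpr hρr)
  have hG := spectrum.pow_nnnorm_pow_one_div_tendsto_nhds_spectralRadius T
  have hev1 := hG.eventually_lt_const hsr
  have hev := hev1.and (eventually_ge_atTop 1)
  obtain ⟨K, hK⟩ := eventually_atTop.mp hev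
  have hTk : ∀ k, K ≤ k → ‖T ^ k‖ ≤ r ^ k := by
    intro k hk
    obtain ⟨h1, h2⟩ := hK k hk
    have hk0 : (k : ℝ) ≠ 0 := Nat.cast_ne_zero.mpr (by omega)
    have hkpos : (0 : ℝ) < (k : ℝ) := by positivity
    have h3 := ENNReal.rpow_lt_rpow h1 hkpos
    rw [← ENNReal.rpow_mul, one_div, inv_mul_cancel₀ hk0, ENNReal.rpow_one] at h3
    rw [ENNReal.ofReal_rpow_of_pos hr0, Real.rpow_natCast] at h3
    rw [← ENNReal.ofReal_coe_nnreal, coe_nnnorm] at h3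
    exact le_of_lt ((ENNReal.ofReal_lt_ofReal_iff_of_nonneg (norm_nonneg _)).mp h3)
  set b : ℝ := max 1 ‖T‖ with hb
  have hb1 : (1 : ℝ) ≤ b := le_max_left _ _
  have haux : ∀ k, ‖T ^ k‖ ≤ b ^ k := by
    intro k
    induction k with
    | zero => simpa using ContinuousLinearMap.norm_id_le
    | succ k ih =>
      rw [pow_succ, pow_succ]
      calc ‖T ^ k * T‖ ≤ ‖T ^ k‖ * ‖T‖ := norm_mul_le _ _
      _ ≤ b ^ k * b := by
          apply mul_le_mul ih (le_max_right _ _) (norm_nonneg _)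
          positivity
  set C : ℝ := 1 + b ^ K / r ^ K with hC
  have hCge1 : (1 : ℝ) ≤ C := by
    rw [hC]
    have : 0 ≤ b ^ K / r ^ K := by positivity
    linarith
  refine ⟨r, C, hr0, hr1, by linarith, fun k j i => ?_⟩
  -- entrywise bound via operator norm
  have hMk : ∀ k, ∀ j i : Fin n, (M ^ k) j i = ((A ^ k) j i : ℂ) := by
    intro k
    induction k with
    | zero =>
      intro j i
      simp [Matrix.one_apply]
      split <;> simp
    | succ k ih =>
      intro j i
      rw [pow_succ, pow_succ, Matrix.mul_apply, Matrix.mul_apply]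
      push_cast
      refine Finset.sum_congr rfl fun l _ => ?_
      rw [ih j l, hM]
      simp [Matrix.map_apply]
  have hentry : |(A ^ k) j i| ≤ ‖T ^ k‖ := by
    have e1 := entry_le_clm_norm (M ^ k) j i
    rw [hMk k j i] at e1
    rw [map_pow (Matrix.toEuclideanCLM (𝕜 := ℂ)) M k] at e1
    simpa [Complex.norm_real, Real.norm_eq_abs] using e1
  rcases le_or_gt K k with hk | hk
  · calc |(A ^ k) j i| ≤ ‖T ^ k‖ := hentry
    _ ≤ r ^ k := hTk k hk
    _ ≤ C * r ^ k := le_mul_of_one_le_left (by positivity) hCge1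
  · calc |(A ^ k) j i| ≤ ‖T ^ k‖ := hentry
    _ ≤ b ^ k := haux k
    _ ≤ b ^ K := pow_le_pow_right₀ hb1 (le_of_lt hk)
    _ = (b ^ K / r ^ K) * r ^ K := by field_simp
    _ ≤ (b ^ K / r ^ K) * r ^ k := by
        apply mul_le_mul_of_nonneg_left _ (by positivity)
        exact pow_le_pow_of_le_one (le_of_lt hr0) (le_of_lt hr1) (le_of_lt hk)
    _ ≤ C * r ^ k := by
        apply mul_le_mul_of_nonneg_right _ (by positivity)
        rw [hC]; linarith

/-- If `A = Λᵀ ⬝ diag(L₁,…,Lₙ)` has spectral radius less than `1`, then the dynamical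
network `ℱ = F ∘ φ` has a globally attracting fixed point. -/
theorem stability_of_dynamical_network
    {n : ℕ} (hn : 1 ≤ n) (X : Fin n → Type*)
    [∀ i, MetricSpace (X i)] [∀ i, Nonempty (X i)] [∀ i, CompleteSpace (X i)]
    (φ : ∀ i, X i → X i) (L : Fin n → ℝ) (hL : ∀ i, 0 ≤ L i)
    (hφ : ∀ i, ∀ u v : X i, dist (φ i u) (φ i v) ≤ L i * dist u v)
    (F : (∀ i, X i) → (∀ i, X i))
    (Λ : Matrix (Fin n) (Fin n) ℝ) (hΛ : ∀ i j, 0 ≤ Λ i j)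
    (hF : ∀ x y : ∀ i, X i, ∀ j, dist (F x j) (F y j) ≤ ∑ i, Λ i j * dist (x i) (y i))
    (A : Matrix (Fin n) (Fin n) ℝ) (hA : ∀ j i, A j i = Λ i j * L i)
    (hρ : specRad A < 1) :
    ∃ p : ∀ i, X i,
      F (fun i => φ i (p i)) = p ∧
      ∀ x : ∀ i, X i,
        Tendsto (fun k => (fun x : ∀ i, X i => F (fun i => φ i (x i)))^[k] x)
          atTop (nhds p) := by
  classical
  obtain ⟨r, C, hr0, hr1, hC0, hbnd⟩ := matrix_pow_entry_bound hn A hρ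
  set G : (∀ i, X i) → ∀ i, X i := fun x => F (fun i => φ i (x i)) with hG
  have hApos : ∀ j i, 0 ≤ A j i := fun j i => by
    rw [hA]; exact mul_nonneg (hΛ i j) (hL i)
  have hAk : ∀ k, ∀ j i : Fin n, 0 ≤ (A ^ k) j i := by
    intro k
    induction k with
    | zero =>
      intro j i
      rw [pow_zero, Matrix.one_apply]
      split <;> norm_num
    | succ k ih =>
      intro j i
      rw [pow_succ', Matrix.mul_apply]
      exact Finset.sum_nonneg fun l _ => mul_nonneg (hApos j l) (ih l i)
  have hstep : ∀ u v : ∀ i, X i, ∀ j, dist (G u j) (G v j) ≤ ∑ i, A j i * dist (u i) (v i) := by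
    intro u v j
    calc dist (G u j) (G v j) ≤ ∑ i, Λ i j * dist (φ i (u i)) (φ i (v i)) := hF _ _ j
    _ ≤ ∑ i, A j i * dist (u i) (v i) := by
        refine Finset.sum_le_sum fun i _ => ?_
        rw [hA]
        calc Λ i j * dist (φ i (u i)) (φ i (v i)) ≤ Λ i j * (L i * dist (u i) (v i)) :=
          mul_le_mul_of_nonneg_left (hφ i _ _) (hΛ i j)
        _ = Λ i j * L i * dist (u i) (v i) := (mul_assoc _ _ _).symm
  have hiter : ∀ k, ∀ x y : ∀ i, X i, ∀ j,
      dist (G^[k] x j) (G^[k] y j) ≤ ∑ i, (A ^ k) j i * dist (x i) (y i) := by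
    intro k
    induction k with
    | zero =>
      intro x y j
      simp [Matrix.one_apply]
    | succ k ih =>
      intro x y j
      simp only [Function.iterate_succ_apply']
      calc dist (G (G^[k] x) j) (G (G^[k] y) j)
          ≤ ∑ i, A j i * dist (G^[k] x i) (G^[k] y i) := hstep _ _ j
      _ ≤ ∑ i, A j i * (∑ l, (A ^ k) i l * dist (x l) (y l)) :=
          Finset.sum_le_sum fun i _ => mul_le_mul_of_nonneg_left (ih x y i) (hApos j i)
      _ = ∑ l, (∑ i, A j i * (A ^ k) i l) * dist (x l) (y l) := by
          simp_rw [Finset.mul_sum, Finset.sum_mul, mul_assoc]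
          exact Finset.sum_comm
      _ = ∑ l, (A ^ (k + 1)) j l * dist (x l) (y l) := by
          simp_rw [pow_succ', Matrix.mul_apply]
  set C' : ℝ := n * C with hC'
  have hC'0 : 0 < C' := by
    rw [hC']
    have : (0 : ℝ) < n := by exact_mod_cast hn
    positivity
  have hDlip : ∀ k, ∀ x y : ∀ i, X i, dist (G^[k] x) (G^[k] y) ≤ C' * r ^ k * dist x y := by
    intro k x y
    have hnn : 0 ≤ C' * r ^ k * dist x y := by positivity
    rw [dist_pi_le_iff hnn]
    intro j
    calc dist (G^[k] x j) (G^[k] y j) ≤ ∑ i, (A ^ k) j i * dist (x i) (y i) := hiter k x y j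
    _ ≤ ∑ _i : Fin n, (C * r ^ k) * dist x y := by
        refine Finset.sum_le_sum fun i _ => ?_
        exact mul_le_mul (le_trans (le_abs_self _) (hbnd k j i)) (dist_le_pi_dist x y i)
          dist_nonneg (by positivity)
    _ = C' * r ^ k * dist x y := by
        rw [Finset.sum_const, Finset.card_univ, Fintype.card_fin, hC']
        simp [nsmul_eq_mul]; ring
  have hlip1 : ∀ x y : ∀ i, X i, dist (G x) (G y) ≤ (C' * r) * dist x y := by
    intro x y
    have := hDlip 1 x y
    simpa [pow_one] using this
  have hGcont : Continuous G := by
    have : LipschitzWith (Real.toNNReal (C' * r)) G := by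
      apply LipschitzWith.of_dist_le_mul
      intro x y
      refine le_trans (hlip1 x y) ?_
      apply mul_le_mul_of_nonneg_right _ dist_nonneg
      exact le_of_eq (Real.coe_toNNReal _ (by positivity)).symm
    exact this.continuous
  -- construct the fixed point
  obtain ⟨x₀⟩ : Nonempty (∀ i, X i) := inferInstance
  set u : ℕ → ∀ i, X i := fun k => G^[k] x₀ with hu
  have hcauchy : CauchySeq u := by
    apply cauchySeq_of_le_geometric r (C' * dist x₀ (G x₀)) hr1
    intro k
    calc dist (u k) (u (k + 1)) = dist (G^[k] x₀) (G^[k] (G x₀)) := by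
          rw [hu]; simp [Function.iterate_succ_apply]
    _ ≤ C' * r ^ k * dist x₀ (G x₀) := hDlip k _ _
    _ = C' * dist x₀ (G x₀) * r ^ k := by ring
  obtain ⟨p, hp⟩ := cauchySeq_tendsto_of_complete hcauchy
  have hfix : G p = p := by
    have h1 : Tendsto (fun k => u (k + 1)) atTop (nhds p) :=
      hp.comp (tendsto_add_atTop_nat 1)
    have h2 : Tendsto (fun k => G (u k)) atTop (nhds (G p)) :=
      (hGcont.tendsto p).comp hp
    have h3 : (fun k => G (u k)) = fun k => u (k + 1) := by
      funext k
      rw [hu]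
      simp [Function.iterate_succ_apply']
    rw [h3] at h2
    exact tendsto_nhds_unique h2 h1
  refine ⟨p, hfix, ?_⟩
  intro x
  have hpk : ∀ k, G^[k] p = p := fun k => Function.iterate_fixed hfix k
  have hd : ∀ k, dist (G^[k] x) p ≤ C' * dist x p * r ^ k := by
    intro k
    calc dist (G^[k] x) p = dist (G^[k] x) (G^[k] p) := by rw [hpk]
    _ ≤ C' * r ^ k * dist x p := hDlip k x p
    _ = C' * dist x p * r ^ k := by ring
  have hlim : Tendsto (fun k : ℕ => C' * dist x p * r ^ k) atTop (nhds 0) := by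
    have := (tendsto_pow_atTop_nhds_zero_of_lt_one (le_of_lt hr0) hr1).const_mul
      (C' * dist x p)
    simpa using this
  refine tendsto_iff_dist_tendsto_zero.mpr ?_
  exact squeeze_zero (fun k => dist_nonneg) hd hlim
end

section
/- Let n ≥ 1, let W be an n×n real matrix, let ε, 𝓛, c₁,…,c_n be real numbers with 𝓛 ≥ 0, and let φ_1,…,φ_n : ℝ → ℝ be continuous functions each satisfying |φ_i(u) − φ_i(v)| ≤ 𝓛·|u − v| for all u, v ∈ ℝ. Define ℱ : ℝⁿ → ℝⁿ by ℱ(x)_j = (1 − ε)·x_j + Σ_{i=1}^n W_{ij}·φ_i(x_i) + c_j. If |1 − ε| + 𝓛·ρ(|W|) < 1, then ℱ has a globally attracting fixed point (in the sup metric on ℝⁿ). -/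
open Filter
open scoped Matrix

attribute [local instance] Matrix.linftyOpNormedAddCommGroup Matrix.linftyOpNormedRing
  Matrix.linftyOpNormedAlgebra

private lemma spectrum_transpose_aux {n : ℕ} (M : Matrix (Fin n) (Fin n) ℂ) :
    spectrum ℂ Mᵀ = spectrum ℂ M := by
  ext μ
  simp only [spectrum.mem_iff, not_iff_not]
  rw [Matrix.isUnit_iff_isUnit_det, Matrix.isUnit_iff_isUnit_det]
  have h : algebraMap ℂ (Matrix (Fin n) (Fin n) ℂ) μ - Mᵀ = (algebraMap ℂ _ μ - M)ᵀ := by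
    rw [Matrix.transpose_sub]
    congr 1
    simp [Matrix.algebraMap_eq_diagonal]
  rw [h, Matrix.det_transpose]

private lemma nnnorm_map_ofReal_aux {n : ℕ} (M : Matrix (Fin n) (Fin n) ℝ) :
    ‖M.map (fun x => (x : ℂ))‖₊ = ‖M‖₊ := by
  simp [Matrix.linfty_opNNNorm_def, Matrix.map_apply]

/-- Stability of Cohen–Grossberg neural networks: if `|1 − ε| + 𝓛·ρ(|W|) < 1` then the
network `ℱ(x)_j = (1 − ε)x_j + Σᵢ W_{ij} φᵢ(xᵢ) + c_j` has a globally attracting fixed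
point. -/
theorem cohenGrossberg_stability
    {n : ℕ} (hn : 1 ≤ n) (W : Matrix (Fin n) (Fin n) ℝ)
    (ε 𝓛 : ℝ) (c : Fin n → ℝ) (h𝓛 : 0 ≤ 𝓛)
    (φ : Fin n → ℝ → ℝ) (hφc : ∀ i, Continuous (φ i))
    (hφ : ∀ i, ∀ u v : ℝ, |φ i u - φ i v| ≤ 𝓛 * |u - v|)
    (hρ : |1 - ε| + 𝓛 * specRad (Matrix.of fun i j => |W i j|) < 1) :
    ∃ p : Fin n → ℝ,
      (fun j => (1 - ε) * p j + ∑ i, W i j * φ i (p i) + c j) = p ∧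
      ∀ x : Fin n → ℝ,
        Tendsto
          (fun k =>
            (fun x : Fin n → ℝ => fun j => (1 - ε) * x j + ∑ i, W i j * φ i (x i) + c j)^[k] x)
          atTop (nhds p) := by
  classical
  haveI : NeZero n := ⟨by omega⟩
  set f : (Fin n → ℝ) → (Fin n → ℝ) :=
    fun x : Fin n → ℝ => fun j => (1 - ε) * x j + ∑ i, W i j * φ i (x i) + c j with hfdef
  set B : Matrix (Fin n) (Fin n) ℝ := Matrix.of fun i j => |W i j| with hBdef
  set A : Matrix (Fin n) (Fin n) ℝ :=
    |1 - ε| • (1 : Matrix (Fin n) (Fin n) ℝ) + 𝓛 • Bᵀ with hAdef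
  set Ac : Matrix (Fin n) (Fin n) ℂ := A.map (fun x => (x : ℂ)) with hAcdef
  set Bc : Matrix (Fin n) (Fin n) ℂ := B.map (fun x => (x : ℂ)) with hBcdef
  -- spectrum bound for Ac
  have hAc_eq : Ac = algebraMap ℂ (Matrix (Fin n) (Fin n) ℂ) (|1 - ε| : ℝ)
      + (𝓛 : ℂ) • Bcᵀ := by
    ext i j
    simp only [hAcdef, Matrix.map_apply, hAdef, Matrix.add_apply, Matrix.smul_apply,
      Matrix.algebraMap_matrix_apply, Matrix.one_apply, Matrix.transpose_apply, hBcdef,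
      smul_eq_mul]
    split_ifs <;> simp [Algebra.algebraMap_self_apply] <;> push_cast <;> ring
  have hbdd : BddAbove ((fun μ => ‖μ‖) '' spectrum ℂ Bc) :=
    ((spectrum.isCompact Bc).image continuous_norm).bddAbove
  have hspec_le : ∀ μ ∈ spectrum ℂ Bc, ‖μ‖ ≤ specRad B :=
    fun μ hμ => le_csSup hbdd ⟨μ, hμ, rfl⟩
  have hκ : ∀ κ ∈ spectrum ℂ Ac, ‖κ‖₊ < 1 := by
    intro κ hκmem
    rw [hAc_eq, ← spectrum.singleton_add_eq] at hκmem
    obtain ⟨r, hr, z, hz, hrz⟩ := Set.mem_add.mp hκmem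
    rw [Set.mem_singleton_iff] at hr
    subst hr
    have hz' : ∃ μ ∈ spectrum ℂ Bcᵀ, z = (𝓛 : ℂ) * μ := by
      rcases eq_or_ne 𝓛 0 with h0 | h0
      · rw [h0] at hz
        simp only [Complex.ofReal_zero, zero_smul, spectrum.zero_eq,
          Set.mem_singleton_iff] at hz
        subst hz
        obtain ⟨μ, hμ⟩ := spectrum.nonempty (Bcᵀ)
        exact ⟨μ, hμ, by rw [h0]; simp⟩
      · rw [spectrum.smul_eq_smul (𝓛 : ℂ) (Bcᵀ) (spectrum.nonempty _)] at hz
        obtain ⟨μ, hμ, hμz⟩ := Set.mem_smul_set.mp hz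
        exact ⟨μ, hμ, by rw [← hμz]; simp [smul_eq_mul]⟩
    obtain ⟨μ, hμ, hzμ⟩ := hz'
    rw [spectrum_transpose_aux] at hμ
    have h1 : ‖κ‖ ≤ |1 - ε| + 𝓛 * ‖μ‖ := by
      rw [← hrz, hzμ]
      calc ‖((|1 - ε| : ℝ) : ℂ) + (𝓛 : ℂ) * μ‖
          ≤ ‖((|1 - ε| : ℝ) : ℂ)‖ + ‖(𝓛 : ℂ) * μ‖ := norm_add_le _ _
        _ = |1 - ε| + 𝓛 * ‖μ‖ := by
            rw [norm_mul]
            simp [abs_of_nonneg h𝓛, abs_abs]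
    have h2 : ‖κ‖ < 1 := by
      have := hspec_le μ hμ
      have h3 : 𝓛 * ‖μ‖ ≤ 𝓛 * specRad B := by
        exact mul_le_mul_of_nonneg_left this h𝓛
      calc ‖κ‖ ≤ |1 - ε| + 𝓛 * ‖μ‖ := h1
        _ ≤ |1 - ε| + 𝓛 * specRad B := by linarith
        _ < 1 := hρ
    exact_mod_cast h2
  have hsr : spectralRadius ℂ Ac < 1 := by
    have := spectrum.spectralRadius_lt_of_forall_lt (a := Ac) (r := 1) hκ
    simpa using this
  -- Gelfand: find m with ‖A ^ m‖₊ < 1 and 1 ≤ m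
  have hgel := spectrum.pow_nnnorm_pow_one_div_tendsto_nhds_spectralRadius Ac
  have hev : ∀ᶠ k : ℕ in atTop, ((‖Ac ^ k‖₊ : ENNReal) ^ (1 / (k : ℝ))) < 1 :=
    hgel.eventually_lt_const hsr
  obtain ⟨m, hm1, hmlt⟩ : ∃ m : ℕ, 1 ≤ m ∧ ((‖Ac ^ m‖₊ : ENNReal) ^ (1 / (m : ℝ))) < 1 := by
    obtain ⟨m, hm⟩ := (hev.and (eventually_ge_atTop 1)).exists
    exact ⟨m, hm.2, hm.1⟩
  have hAm : ‖A ^ m‖₊ < 1 := by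
    have hc : Ac ^ m = (A ^ m).map (fun x => (x : ℂ)) := by
      rw [hAcdef]
      have : ∀ M : Matrix (Fin n) (Fin n) ℝ, M.map (fun x => (x : ℂ))
          = (Complex.ofRealHom.mapMatrix : Matrix (Fin n) (Fin n) ℝ →+* _) M := fun _ => rfl
      rw [this, this, map_pow]
    have hlt : (‖Ac ^ m‖₊ : ENNReal) < 1 := by
      by_contra hge
      push_neg at hge
      have : (1 : ENNReal) ≤ ((‖Ac ^ m‖₊ : ENNReal) ^ (1 / (m : ℝ))) := by
        calc (1 : ENNReal) = 1 ^ (1 / (m : ℝ)) := (ENNReal.one_rpow _).symm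
          _ ≤ ((‖Ac ^ m‖₊ : ENNReal) ^ (1 / (m : ℝ))) :=
            ENNReal.rpow_le_rpow hge (by positivity)
      exact absurd hmlt (not_lt.mpr this)
    rw [hc, nnnorm_map_ofReal_aux] at hlt
    exact_mod_cast hlt
  -- entrywise contraction estimate
  have hAnn : ∀ j i : Fin n, 0 ≤ A j i := by
    intro j i
    simp only [hAdef, Matrix.add_apply, Matrix.smul_apply, Matrix.one_apply,
      Matrix.transpose_apply, hBdef, Matrix.of_apply, smul_eq_mul]
    positivity
  have hApow_nn : ∀ k : ℕ, ∀ j i : Fin n, 0 ≤ (A ^ k) j i := by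
    intro k
    induction k with
    | zero => intro j i; simp [Matrix.one_apply]; positivity
    | succ k ih =>
      intro j i
      rw [pow_succ, Matrix.mul_apply]
      exact Finset.sum_nonneg fun l _ => mul_nonneg (ih j l) (hAnn l i)
  have hstep : ∀ x y : Fin n → ℝ, ∀ j : Fin n,
      |f x j - f y j| ≤ (A *ᵥ fun i => |x i - y i|) j := by
    intro x y j
    have hAv : (A *ᵥ fun i => |x i - y i|) j
        = |1 - ε| * |x j - y j| + 𝓛 * ∑ i, |W i j| * |x i - y i| := by
      rw [hAdef, Matrix.add_mulVec, Matrix.smul_mulVec, Matrix.smul_mulVec,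
        Matrix.one_mulVec]
      simp only [Pi.add_apply, Pi.smul_apply, smul_eq_mul, Matrix.mulVec, dotProduct,
        Matrix.transpose_apply, hBdef, Matrix.of_apply, Finset.mul_sum]
    rw [hAv]
    have : f x j - f y j = (1 - ε) * (x j - y j) + ∑ i, W i j * (φ i (x i) - φ i (y i)) := by
      simp only [hfdef]
      rw [show (∑ i, W i j * (φ i (x i) - φ i (y i)))
          = ∑ i, W i j * φ i (x i) - ∑ i, W i j * φ i (y i) by
        rw [← Finset.sum_sub_distrib]; exact Finset.sum_congr rfl fun i _ => by ring]
      ring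
    rw [this]
    calc |(1 - ε) * (x j - y j) + ∑ i, W i j * (φ i (x i) - φ i (y i))|
        ≤ |(1 - ε) * (x j - y j)| + |∑ i, W i j * (φ i (x i) - φ i (y i))| := abs_add_le _ _
      _ ≤ |1 - ε| * |x j - y j| + ∑ i, |W i j| * (𝓛 * |x i - y i|) := by
          gcongr
          · rw [abs_mul]
          · calc |∑ i, W i j * (φ i (x i) - φ i (y i))|
                ≤ ∑ i, |W i j * (φ i (x i) - φ i (y i))| := Finset.abs_sum_le_sum_abs _ _
              _ ≤ ∑ i, |W i j| * (𝓛 * |x i - y i|) := by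
                  apply Finset.sum_le_sum
                  intro i _
                  rw [abs_mul]
                  exact mul_le_mul_of_nonneg_left (hφ i (x i) (y i)) (abs_nonneg _)
      _ = |1 - ε| * |x j - y j| + 𝓛 * ∑ i, |W i j| * |x i - y i| := by
          rw [Finset.mul_sum]
          congr 1
          apply Finset.sum_congr rfl
          intro i _
          ring
  have hkey : ∀ k : ℕ, ∀ x y : Fin n → ℝ, ∀ j : Fin n,
      |f^[k] x j - f^[k] y j| ≤ ((A ^ k) *ᵥ fun i => |x i - y i|) j := by
    intro k
    induction k with
    | zero =>
      intro x y j
      simp [Matrix.one_mulVec]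
    | succ k ih =>
      intro x y j
      rw [Function.iterate_succ_apply', Function.iterate_succ_apply']
      calc |f (f^[k] x) j - f (f^[k] y) j|
          ≤ (A *ᵥ fun i => |f^[k] x i - f^[k] y i|) j := hstep _ _ j
        _ ≤ (A *ᵥ ((A ^ k) *ᵥ fun i => |x i - y i|)) j := by
            rw [Matrix.mulVec, Matrix.mulVec, dotProduct, dotProduct]
            exact Finset.sum_le_sum fun i _ =>
              mul_le_mul_of_nonneg_left (ih x y i) (hAnn j i)
        _ = ((A ^ (k + 1)) *ᵥ fun i => |x i - y i|) j := by
            rw [Matrix.mulVec_mulVec, ← pow_succ']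
  -- Lipschitz/dist estimates
  have hdistv : ∀ x y : Fin n → ℝ, ‖(fun i => |x i - y i|)‖ = dist x y := by
    intro x y
    rw [dist_eq_norm]
    simp only [Pi.norm_def, Pi.nnnorm_def]
    congr 1
    apply Finset.sup_congr rfl
    intro i _
    simp [Real.nnnorm_abs, Pi.sub_apply]
  have hdist : ∀ k : ℕ, ∀ x y : Fin n → ℝ,
      dist (f^[k] x) (f^[k] y) ≤ ‖A ^ k‖ * dist x y := by
    intro k x y
    have h0 : 0 ≤ ‖A ^ k‖ * dist x y := mul_nonneg (norm_nonneg _) dist_nonneg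
    rw [dist_pi_le_iff h0]
    intro j
    rw [Real.dist_eq]
    calc |f^[k] x j - f^[k] y j| ≤ ((A ^ k) *ᵥ fun i => |x i - y i|) j := hkey k x y j
      _ ≤ ‖((A ^ k) *ᵥ fun i => |x i - y i|)‖ := by
          have h := norm_le_pi_norm ((A ^ k) *ᵥ fun i => |x i - y i|) j
          rw [Real.norm_eq_abs] at h
          exact le_trans (le_abs_self _) h
      _ ≤ ‖A ^ k‖ * ‖(fun i => |x i - y i|)‖ := Matrix.linfty_opNorm_mulVec _ _
      _ = ‖A ^ k‖ * dist x y := by rw [hdistv]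
  set g := f^[m] with hgdef
  have hlip : LipschitzWith ‖A ^ m‖₊ g :=
    LipschitzWith.of_dist_le_mul fun x y => by
      simpa [coe_nnnorm] using hdist m x y
  have hcontr : ContractingWith ‖A ^ m‖₊ g := ⟨hAm, hlip⟩
  set p := ContractingWith.fixedPoint g hcontr with hpdef
  have hgp : g p = p := hcontr.fixedPoint_isFixedPt
  have hfp : f p = p := by
    have h1 : Function.IsFixedPt g (f p) := by
      show g (f p) = f p
      rw [hgdef]
      calc f^[m] (f p) = f^[m + 1] p := by rw [Function.iterate_succ_apply]
        _ = f (f^[m] p) := by rw [Function.iterate_succ_apply']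
        _ = f p := by rw [show f^[m] p = p from hgp]
    exact hcontr.fixedPoint_unique h1
  refine ⟨p, hfp, ?_⟩
  intro x
  -- bound on iterates of f by iterates of g
  have hM : ∀ r : ℕ, ‖A ^ r‖ ≤ (‖A‖ + 1) ^ r := by
    intro r
    induction r with
    | zero => simp
    | succ r ih =>
      calc ‖A ^ (r + 1)‖ = ‖A ^ r * A‖ := by rw [pow_succ]
        _ ≤ ‖A ^ r‖ * ‖A‖ := norm_mul_le _ _
        _ ≤ (‖A‖ + 1) ^ r * (‖A‖ + 1) := by
            apply mul_le_mul ih (by linarith) (norm_nonneg _)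
            positivity
        _ = (‖A‖ + 1) ^ (r + 1) := by rw [pow_succ]
  have hone : (1 : ℝ) ≤ ‖A‖ + 1 := by have := norm_nonneg A; linarith
  have hm0 : 0 < m := hm1
  have hbound : ∀ k : ℕ, dist (f^[k] x) p ≤ (‖A‖ + 1) ^ m * dist (g^[k / m] x) p := by
    intro k
    have hks : f^[k] x = f^[k % m] (g^[k / m] x) := by
      conv_lhs => rw [← Nat.mod_add_div k m]
      rw [Function.iterate_add_apply, Function.iterate_mul]
    have hps : p = f^[k % m] p := (Function.IsFixedPt.iterate hfp (k % m)).symm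
    calc dist (f^[k] x) p = dist (f^[k % m] (g^[k / m] x)) (f^[k % m] p) := by
          rw [← hks, ← hps]
        _ ≤ ‖A ^ (k % m)‖ * dist (g^[k / m] x) p := hdist _ _ _
        _ ≤ (‖A‖ + 1) ^ m * dist (g^[k / m] x) p := by
            apply mul_le_mul_of_nonneg_right _ dist_nonneg
            calc ‖A ^ (k % m)‖ ≤ (‖A‖ + 1) ^ (k % m) := hM _
              _ ≤ (‖A‖ + 1) ^ m := by
                  apply pow_le_pow_right₀ hone (le_of_lt (Nat.mod_lt _ hm0))
  have hdiv : Tendsto (fun k : ℕ => k / m) atTop atTop := by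
    apply tendsto_atTop_atTop.mpr
    intro b
    refine ⟨m * b, fun k hk => ?_⟩
    exact (Nat.le_div_iff_mul_le hm0).mpr (by linarith [Nat.mul_comm m b])
  have hGt : Tendsto (fun q : ℕ => g^[q] x) atTop (nhds p) :=
    hcontr.tendsto_iterate_fixedPoint x
  have h2 : Tendsto (fun k : ℕ => g^[k / m] x) atTop (nhds p) := hGt.comp hdiv
  have h3 : Tendsto (fun k : ℕ => dist (g^[k / m] x) p) atTop (nhds 0) := by
    have := h2.dist (tendsto_const_nhds (x := p))
    simpa using this
  have h4 : Tendsto (fun k : ℕ => dist (f^[k] x) p) atTop (nhds 0) := by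
    apply squeeze_zero (fun k => dist_nonneg) hbound
    have := h3.const_mul ((‖A‖ + 1) ^ m)
    simpa using this
  exact tendsto_iff_dist_tendsto_zero.mpr h4
end

section
/- Let n ≥ 1 and let a, b, ε, c₁,…,c_n be real numbers. Define ℱ : ℝⁿ → ℝⁿ by ℱ(x)_j = (1 − ε)·x_j + a·(tanh(b·x_{j−1}) + tanh(b·x_{j+1})) + c_j, where the indices j − 1 and j + 1 are taken modulo n. If |1 − ε| + 2|ab| < 1, then ℱ has a globally attracting fixed point (in the sup metric on ℝⁿ). -/
open Filter

lemma tanh_lipschitz : LipschitzWith 1 Real.tanh := by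
  have hderiv : ∀ x : ℝ, HasDerivAt Real.tanh (1 / Real.cosh x ^ 2) x := by
    intro x
    have h : HasDerivAt (fun x => Real.sinh x / Real.cosh x)
        ((Real.cosh x * Real.cosh x - Real.sinh x * Real.sinh x) / Real.cosh x ^ 2) x :=
      (Real.hasDerivAt_sinh x).div (Real.hasDerivAt_cosh x) (ne_of_gt (Real.cosh_pos x))
    have h2 : Real.cosh x * Real.cosh x - Real.sinh x * Real.sinh x = 1 := by
      have := Real.cosh_sq_sub_sinh_sq x; nlinarith
    have ht : Real.tanh = fun x => Real.sinh x / Real.cosh x :=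
      funext Real.tanh_eq_sinh_div_cosh
    rw [ht]
    simpa [h2] using h
  apply lipschitzWith_of_nnnorm_deriv_le (fun x => (hderiv x).differentiableAt)
  intro x
  rw [(hderiv x).deriv]
  have h1 : (1 : ℝ) ≤ Real.cosh x := Real.one_le_cosh x
  have : ‖(1 : ℝ) / Real.cosh x ^ 2‖ ≤ 1 := by
    rw [Real.norm_eq_abs, abs_div, abs_one, abs_of_pos (by positivity)]
    rw [div_le_one (by positivity)]; nlinarith
  exact_mod_cast this

lemma tanh_dist (u v : ℝ) : |Real.tanh u - Real.tanh v| ≤ |u - v| := by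
  have := tanh_lipschitz.dist_le_mul u v
  simpa [Real.dist_eq] using this

/-- Stability of the ring Cohen–Grossberg network
`ℱ(x)_j = (1 − ε)x_j + a(tanh(b x_{j−1}) + tanh(b x_{j+1})) + c_j` (indices mod `n`):
if `|1 − ε| + 2|ab| < 1` then `ℱ` has a globally attracting fixed point. -/
theorem ring_network_stability
    {n : ℕ} [NeZero n] (a b ε : ℝ) (c : Fin n → ℝ)
    (hρ : |1 - ε| + 2 * |a * b| < 1) :
    ∃ p : Fin n → ℝ,
      (fun j => (1 - ε) * p j + a * (Real.tanh (b * p (j - 1)) + Real.tanh (b * p (j + 1))) + c j)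
        = p ∧
      ∀ x : Fin n → ℝ,
        Tendsto
          (fun k =>
            (fun x : Fin n → ℝ => fun j =>
              (1 - ε) * x j + a * (Real.tanh (b * x (j - 1)) + Real.tanh (b * x (j + 1))) + c j)^[k] x)
          atTop (nhds p) := by
  set F : (Fin n → ℝ) → (Fin n → ℝ) := fun x => fun j =>
      (1 - ε) * x j + a * (Real.tanh (b * x (j - 1)) + Real.tanh (b * x (j + 1))) + c j with hF
  set K : NNReal := ⟨|1 - ε| + 2 * |a * b|, by positivity⟩ with hK
  have hcontr : ContractingWith K F := by
    constructor
    · exact_mod_cast hρ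
    · apply LipschitzWith.of_dist_le_mul
      intro x y
      rw [dist_pi_le_iff (by positivity)]
      intro j
      have hd : ∀ i : Fin n, |x i - y i| ≤ dist x y := fun i => by
        simpa [Real.dist_eq] using dist_le_pi_dist x y i
      have hdist : (0:ℝ) ≤ dist x y := dist_nonneg
      have key : ∀ i : Fin n, |Real.tanh (b * x i) - Real.tanh (b * y i)| ≤ |b| * dist x y := by
        intro i
        calc |Real.tanh (b * x i) - Real.tanh (b * y i)| ≤ |b * x i - b * y i| :=
              tanh_dist _ _
          _ = |b| * |x i - y i| := by rw [← mul_sub, abs_mul]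
          _ ≤ |b| * dist x y := by
              exact mul_le_mul_of_nonneg_left (hd i) (abs_nonneg b)
      rw [Real.dist_eq]
      have expand : F x j - F y j = (1 - ε) * (x j - y j)
          + a * (Real.tanh (b * x (j - 1)) - Real.tanh (b * y (j - 1)))
          + a * (Real.tanh (b * x (j + 1)) - Real.tanh (b * y (j + 1))) := by
        simp only [hF]; ring
      calc |F x j - F y j|
          ≤ |(1 - ε) * (x j - y j)|
            + |a * (Real.tanh (b * x (j - 1)) - Real.tanh (b * y (j - 1)))|
            + |a * (Real.tanh (b * x (j + 1)) - Real.tanh (b * y (j + 1)))| := by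
            rw [expand]; exact (abs_add_le _ _).trans (by gcongr; exact abs_add_le _ _)
        _ ≤ |1 - ε| * dist x y + |a| * (|b| * dist x y) + |a| * (|b| * dist x y) := by
            rw [abs_mul, abs_mul, abs_mul]
            gcongr
            · exact hd j
            · exact key _
            · exact key _
        _ = (|1 - ε| + 2 * |a * b|) * dist x y := by rw [abs_mul]; ring
        _ = (K : ℝ) * dist x y := rfl
  refine ⟨hcontr.fixedPoint F, ?_, fun x => hcontr.tendsto_iterate_fixedPoint x⟩
  exact hcontr.fixedPoint_isFixedPt
end

section
/- Let n ≥ 1, let (X_i, d_i) for i = 1,…,n be nonempty complete metric spaces, and equip X = Π_{i=1}^n X_i with the sup metric. Let G : X → X satisfy d(G(x)_j, G(y)_j) ≤ Σ_{i=1}^n Λ_{ij}·d(x_i, y_i) for all x, y ∈ X and all j, where Λ is a nonnegative n×n real matrix with ρ(Λᵀ) < 1. Let T ≥ 1 and let τ_{ij} ∈ {0, 1, …, T−1} for all i, j (these delays realize a non-distributed time-delayed interaction). Then there exists x̃ ∈ X with G(x̃) = x̃ such that: (a) x̃ is a globally attracting fixed point of G, and (b) every sequence u : ℕ → X satisfying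 u(k+T)_j = G_j((u(k+T−1−τ_{ij})_i)_{i=1,…,n}) for all k ≥ 0 and all j converges to x̃ in the sup metric. -/
open Filter
set_option maxHeartbeats 1000000

set_option synthInstance.maxHeartbeats 1000000
set_option maxHeartbeats 1000000

section SpectralAux

attribute [local instance] Matrix.linftyOpNormedRing Matrix.linftyOpNormedAlgebra

lemma aux_pow_entry_nonneg {n : ℕ} (B : Matrix (Fin n) (Fin n) ℝ)
    (hB : ∀ i j, 0 ≤ B i j) : ∀ m i j, 0 ≤ (B ^ m) i j := by
  intro m
  induction m with
  | zero =>
    intro i j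
    rw [pow_zero, Matrix.one_apply]
    split <;> norm_num
  | succ m ih =>
    intro i j
    rw [pow_succ, Matrix.mul_apply]
    exact Finset.sum_nonneg fun k _ => mul_nonneg (ih i k) (hB k j)

lemma aux_exists_rowsum {n : ℕ} (hn : 1 ≤ n) (B : Matrix (Fin n) (Fin n) ℝ) (hB : ∀ i j, 0 ≤ B i j)
    (hρ : sSup ((fun μ : ℂ => ‖μ‖) '' spectrum ℂ (B.map (fun x => (x : ℂ)))) < 1) :
    ∃ m, 1 ≤ m ∧ ∀ i, ∑ j, (B ^ m) i j < 1 := by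
  haveI : Nonempty (Fin n) := Fin.pos_iff_nonempty.mp hn
  haveI : CompleteSpace (Matrix (Fin n) (Fin n) ℂ) := FiniteDimensional.complete ℂ _
  set Bc : Matrix (Fin n) (Fin n) ℂ := B.map (fun x => (x : ℂ)) with hBcdef
  have hσb : BddAbove ((fun μ : ℂ => ‖μ‖) '' spectrum ℂ Bc) := by
    refine ⟨‖Bc‖ * ‖(1 : Matrix (Fin n) (Fin n) ℂ)‖, ?_⟩
    rintro _ ⟨μ, hμ, rfl⟩
    have h := spectrum.subset_closedBall_norm_mul Bc hμ
    simpa [Metric.mem_closedBall, Complex.dist_eq] using h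
  have hsr : spectralRadius ℂ Bc < 1 := by
    rw [spectralRadius]
    refine lt_of_le_of_lt (iSup₂_le fun μ hμ => ?_) (ENNReal.ofReal_lt_one.mpr hρ)
    have h1 : ‖μ‖ ≤
        sSup ((fun μ : ℂ => ‖μ‖) '' spectrum ℂ Bc) := le_csSup hσb ⟨μ, hμ, rfl⟩
    calc (‖μ‖₊ : ENNReal) = ENNReal.ofReal ‖μ‖ := (ofReal_norm μ).symm
      _ ≤ ENNReal.ofReal (sSup ((fun μ : ℂ => ‖μ‖) '' spectrum ℂ Bc)) :=
        ENNReal.ofReal_le_ofReal h1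
  have hgel := spectrum.pow_nnnorm_pow_one_div_tendsto_nhds_spectralRadius Bc
  obtain ⟨m, hm⟩ := ((hgel.eventually_lt_const hsr).and (eventually_ge_atTop 1)).exists
  refine ⟨m, hm.2, ?_⟩
  have hn1 : ‖Bc ^ m‖₊ < 1 := by
    by_contra h
    push_neg at h
    have h2 : (1 : ENNReal) ≤ ((‖Bc ^ m‖₊ : ENNReal)) ^ (1 / (m : ℝ)) :=
      ENNReal.one_le_rpow (by exact_mod_cast h)
        (by have h3 : (0:ℝ) < m := by exact_mod_cast hm.2
            positivity)
    exact absurd hm.1 (not_lt.mpr h2)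
  intro i
  have hrow : ∑ j, ‖(Bc ^ m) i j‖₊ ≤ ‖Bc ^ m‖₊ := by
    rw [Matrix.linfty_opNNNorm_def]
    exact Finset.le_sup (f := fun i => ∑ j, ‖(Bc ^ m) i j‖₊) (Finset.mem_univ i)
  have hmap : Bc ^ m = (B ^ m).map (fun x => (x : ℂ)) := by
    rw [hBcdef]
    exact (map_pow (Complex.ofRealHom.mapMatrix) B m).symm
  have hsum : ∑ j, (B ^ m) i j = ((∑ j, ‖(Bc ^ m) i j‖₊ : NNReal) : ℝ) := by
    push_cast
    refine Finset.sum_congr rfl fun j _ => ?_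
    rw [hmap]
    simp [Matrix.map_apply,
      abs_of_nonneg (aux_pow_entry_nonneg B hB m i j)]
  rw [hsum]
  have : ((∑ j, ‖(Bc ^ m) i j‖₊ : NNReal) : ℝ) ≤ ((‖Bc ^ m‖₊ : NNReal) : ℝ) := by
    exact_mod_cast hrow
  calc ((∑ j, ‖(Bc ^ m) i j‖₊ : NNReal) : ℝ) ≤ ‖Bc ^ m‖₊ := this
    _ < 1 := by exact_mod_cast hn1

end SpectralAux

section W
variable {n : ℕ}

lemma aux_weights (hn : 1 ≤ n) (B : Matrix (Fin n) (Fin n) ℝ) (hB : ∀ i j, 0 ≤ B i j)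
    (m : ℕ) (hm1 : 1 ≤ m) (hrow : ∀ i, ∑ j, (B ^ m) i j < 1)
    (hpow0 : ∀ k i j, 0 ≤ (B ^ k) i j) :
    ∃ (w : Fin n → ℝ) (c : ℝ), (∀ j, 1 ≤ w j) ∧ 0 ≤ c ∧ c < 1 ∧
      ∀ j, ∑ i, B j i * w i ≤ c * w j := by
  haveI : Nonempty (Fin n) := Fin.pos_iff_nonempty.mp hn
  set c0 : ℝ := Finset.univ.sup' Finset.univ_nonempty (fun i => ∑ j, (B ^ m) i j) with hc0def
  obtain ⟨i₀⟩ := (inferInstance : Nonempty (Fin n))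
  have hc00 : 0 ≤ c0 :=
    le_trans (Finset.sum_nonneg fun j _ => hpow0 m i₀ j)
      (Finset.le_sup' (fun i => ∑ j, (B ^ m) i j) (Finset.mem_univ i₀))
  have hc01 : c0 < 1 := (Finset.sup'_lt_iff _).mpr fun i _ => hrow i
  have hrow' : ∀ i, ∑ j, (B ^ m) i j ≤ c0 := fun i => Finset.le_sup' (fun i => ∑ j, (B ^ m) i j) (Finset.mem_univ i)
  have hm0 : (0:ℝ) < m := by exact_mod_cast hm1
  set t : ℝ := ((1 + c0) / 2) ^ ((1 : ℝ) / (m : ℝ)) with htdef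
  have hb0 : 0 < (1 + c0) / 2 := by linarith
  have hb1 : (1 + c0) / 2 < 1 := by linarith
  have ht0 : 0 < t := Real.rpow_pos_of_pos hb0 _
  have ht1 : t < 1 := Real.rpow_lt_one hb0.le hb1 (by positivity)
  have htm : t ^ m = (1 + c0) / 2 := by
    rw [htdef, ← Real.rpow_natCast (((1 + c0) / 2) ^ ((1:ℝ) / (m:ℝ))) m,
      ← Real.rpow_mul hb0.le, one_div, inv_mul_cancel₀ (ne_of_gt hm0), Real.rpow_one]
  have htmc : c0 ≤ t ^ m := by rw [htm]; linarith
  set v : ℕ → Fin n → ℝ := fun k => (B ^ k).mulVec (fun _ => 1) with hvdef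
  have hv0 : ∀ k j, 0 ≤ v k j := by
    intro k j
    rw [hvdef]
    simp only [Matrix.mulVec, dotProduct]
    exact Finset.sum_nonneg fun i _ => mul_nonneg (hpow0 k j i) zero_le_one
  have hv_succ : ∀ k j, v (k + 1) j = ∑ i, B j i * v k i := by
    intro k j
    rw [hvdef]
    simp only [pow_succ', ← Matrix.mulVec_mulVec]
    simp [Matrix.mulVec, dotProduct]
  have hv_zero : ∀ j, v 0 j = 1 := by
    intro j; rw [hvdef]; simp
  have hvm : ∀ j, v m j ≤ c0 := by
    intro j
    have : v m j = ∑ i, (B ^ m) j i := by rw [hvdef]; simp [Matrix.mulVec, dotProduct]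
    rw [this]; exact hrow' j
  set w0 : Fin n → ℝ := fun j => ∑ k ∈ Finset.range m, t ^ (m - 1 - k) * v k j with hw0def
  have hw0low : ∀ j, t ^ (m - 1) ≤ w0 j := by
    intro j
    have h0 : t ^ (m - 1 - 0) * v 0 j = t ^ (m - 1) := by rw [hv_zero, mul_one, Nat.sub_zero]
    calc t ^ (m - 1) = t ^ (m - 1 - 0) * v 0 j := h0.symm
      _ ≤ w0 j := Finset.single_le_sum
          (fun k _ => mul_nonneg (pow_nonneg ht0.le _) (hv0 k j))
          (Finset.mem_range.mpr hm1)
  have key : ∀ j, ∑ i, B j i * w0 i ≤ t * w0 j := by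
    intro j
    set f : ℕ → ℝ := fun k => t ^ (m - k) * v k j with hfdef
    have lhs_eq : ∑ i, B j i * w0 i = ∑ k ∈ Finset.range m, f (k + 1) := by
      simp only [hw0def, Finset.mul_sum]
      rw [Finset.sum_comm]
      refine Finset.sum_congr rfl fun k _ => ?_
      have : m - (k + 1) = m - 1 - k := by omega
      rw [hfdef]
      simp only [this, hv_succ k j, Finset.mul_sum]
      refine Finset.sum_congr rfl fun i _ => by ring
    have rhs_eq : t * w0 j = ∑ k ∈ Finset.range m, f k := by
      rw [hw0def, Finset.mul_sum]
      refine Finset.sum_congr rfl fun k hk => ?_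
      have hk' : k < m := Finset.mem_range.mp hk
      have he : t ^ (m - k) = t ^ (m - 1 - k) * t := by
        rw [← pow_succ]
        congr 1
        omega
      simp only [hfdef]
      rw [he]
      ring
    have tele : ∑ k ∈ Finset.range m, f (k + 1) + f 0 = ∑ k ∈ Finset.range m, f k + f m := by
      rw [← Finset.sum_range_succ' f m, Finset.sum_range_succ f m]
    have hf0 : f 0 = t ^ m := by rw [hfdef]; simp [hv_zero]
    have hfm : f m ≤ c0 := by
      have : f m = v m j := by rw [hfdef]; simp
      rw [this]; exact hvm j
    rw [lhs_eq, rhs_eq]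
    have : ∑ k ∈ Finset.range m, f (k + 1) =
        ∑ k ∈ Finset.range m, f k + f m - f 0 := by linarith
    rw [this, hf0]
    linarith
  refine ⟨fun j => w0 j / t ^ (m - 1), t, ?_, ht0.le, ht1, ?_⟩
  · intro j
    rw [le_div_iff₀ (pow_pos ht0 _), one_mul]
    exact hw0low j
  · intro j
    have htp : (0:ℝ) < t ^ (m - 1) := pow_pos ht0 _
    have : ∑ i, B j i * (w0 i / t ^ (m - 1)) = (∑ i, B j i * w0 i) / t ^ (m - 1) := by
      rw [Finset.sum_div]
      exact Finset.sum_congr rfl fun i _ => by ring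
    rw [this]
    have hbeta : t * ((fun j => w0 j / t ^ (m - 1)) j) = (t * w0 j) / t ^ (m - 1) := by
      simp [mul_div_assoc]
    rw [hbeta]
    gcongr
    exact key j
end W

/-- If `ρ(Λᵀ) < 1` then the network `G` has a globally attracting fixed point `p`, and
every orbit of any time-delayed version of `G` with non-distributed delays
`τ_{ij} ∈ {0,…,T−1}` converges to `p` as well. -/
theorem nondistributed_delays_stability
    {n : ℕ} (hn : 1 ≤ n) (X : Fin n → Type*)
    [∀ i, MetricSpace (X i)] [∀ i, Nonempty (X i)] [∀ i, CompleteSpace (X i)]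
    (G : (∀ i, X i) → (∀ i, X i))
    (Λ : Matrix (Fin n) (Fin n) ℝ) (hΛ0 : ∀ i j, 0 ≤ Λ i j)
    (hG : ∀ x y : ∀ i, X i, ∀ j, dist (G x j) (G y j) ≤ ∑ i, Λ i j * dist (x i) (y i))
    (hρ : specRad Λ.transpose < 1)
    (T : ℕ) (hT : 1 ≤ T) (τ : Fin n → Fin n → ℕ) (hτ : ∀ i j, τ i j ≤ T - 1) :
    ∃ p : ∀ i, X i,
      G p = p ∧
      (∀ x : ∀ i, X i, Tendsto (fun k => G^[k] x) atTop (nhds p)) ∧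
      (∀ u : ℕ → ∀ i, X i,
        (∀ k, ∀ j, u (k + T) j = G (fun i => u (k + T - 1 - τ i j) i) j) →
        Tendsto u atTop (nhds p)) := by
  haveI : Nonempty (Fin n) := Fin.pos_iff_nonempty.mp hn
  -- obtain the weight vector
  have hB0 : ∀ i j, 0 ≤ Λ.transpose i j := fun i j => hΛ0 j i
  obtain ⟨m, hm1, hrow⟩ := aux_exists_rowsum hn Λ.transpose hB0 hρ
  obtain ⟨w, c, hw1, hc0, hc1, hwc⟩ :=
    aux_weights hn Λ.transpose hB0 m hm1 hrow (aux_pow_entry_nonneg _ hB0)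
  have hwc' : ∀ j, ∑ i, Λ i j * w i ≤ c * w j := by
    intro j
    have := hwc j
    simpa [Matrix.transpose_apply] using this
  have hw0 : ∀ j, (0:ℝ) < w j := fun j => lt_of_lt_of_le one_pos (hw1 j)
  -- the weighted gauge
  set ψ : (∀ i, X i) → (∀ i, X i) → ℝ :=
    fun x y => Finset.univ.sup' Finset.univ_nonempty (fun j => dist (x j) (y j) / w j) with hψdef
  obtain ⟨j₀⟩ := (inferInstance : Nonempty (Fin n))
  have hψ0 : ∀ x y, 0 ≤ ψ x y := fun x y =>
    le_trans (div_nonneg dist_nonneg (hw0 j₀).le)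
      (Finset.le_sup' (fun j => dist (x j) (y j) / w j) (Finset.mem_univ j₀))
  have hdistψ : ∀ x y j, dist (x j) (y j) ≤ w j * ψ x y := by
    intro x y j
    have h1 : dist (x j) (y j) / w j ≤ ψ x y :=
      Finset.le_sup' (fun j => dist (x j) (y j) / w j) (Finset.mem_univ j)
    calc dist (x j) (y j) = dist (x j) (y j) / w j * w j := by
          rw [div_mul_cancel₀ _ (ne_of_gt (hw0 j))]
      _ ≤ ψ x y * w j := mul_le_mul_of_nonneg_right h1 (hw0 j).le
      _ = w j * ψ x y := mul_comm _ _
  have hψdist : ∀ x y, ψ x y ≤ dist x y := by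
    intro x y
    refine Finset.sup'_le _ _ fun j _ => ?_
    exact le_trans (div_le_self dist_nonneg (hw1 j)) (dist_le_pi_dist x y j)
  set W : ℝ := Finset.univ.sup' Finset.univ_nonempty w with hWdef
  have hwW : ∀ j, w j ≤ W := fun j => Finset.le_sup' w (Finset.mem_univ j)
  have hW0 : (0:ℝ) ≤ W := le_trans (hw0 j₀).le (hwW j₀)
  have hdistW : ∀ x y, dist x y ≤ W * ψ x y := by
    intro x y
    rw [dist_pi_le_iff (mul_nonneg hW0 (hψ0 x y))]
    intro j
    calc dist (x j) (y j) ≤ w j * ψ x y := hdistψ x y j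
      _ ≤ W * ψ x y := mul_le_mul_of_nonneg_right (hwW j) (hψ0 x y)
  have hGψ : ∀ x y, ψ (G x) (G y) ≤ c * ψ x y := by
    intro x y
    refine Finset.sup'_le _ _ fun j _ => ?_
    rw [div_le_iff₀ (hw0 j)]
    calc dist (G x j) (G y j) ≤ ∑ i, Λ i j * dist (x i) (y i) := hG x y j
      _ ≤ ∑ i, Λ i j * (w i * ψ x y) :=
        Finset.sum_le_sum fun i _ =>
          mul_le_mul_of_nonneg_left (hdistψ x y i) (hΛ0 i j)
      _ = (∑ i, Λ i j * w i) * ψ x y := by rw [Finset.sum_mul]; simp [mul_assoc]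
      _ ≤ c * w j * ψ x y := mul_le_mul_of_nonneg_right (hwc' j) (hψ0 x y)
      _ = c * ψ x y * w j := by ring
  have hGiter : ∀ (k : ℕ) x y, ψ (G^[k] x) (G^[k] y) ≤ c ^ k * ψ x y := by
    intro k
    induction k with
    | zero => intro x y; simp
    | succ k ih =>
      intro x y
      rw [Function.iterate_succ_apply', Function.iterate_succ_apply']
      calc ψ (G (G^[k] x)) (G (G^[k] y)) ≤ c * ψ (G^[k] x) (G^[k] y) := hGψ _ _
        _ ≤ c * (c ^ k * ψ x y) := mul_le_mul_of_nonneg_left (ih x y) hc0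
        _ = c ^ (k + 1) * ψ x y := by ring
  -- existence of the fixed point
  obtain ⟨x₀⟩ := (inferInstance : Nonempty (∀ i, X i))
  have hcauchy : CauchySeq (fun k => G^[k] x₀) := by
    refine cauchySeq_of_le_geometric c (W * ψ x₀ (G x₀)) hc1 fun k => ?_
    have he : G^[k + 1] x₀ = G^[k] (G x₀) := Function.iterate_succ_apply G k x₀
    rw [he]
    calc dist (G^[k] x₀) (G^[k] (G x₀)) ≤ W * ψ (G^[k] x₀) (G^[k] (G x₀)) := hdistW _ _
      _ ≤ W * (c ^ k * ψ x₀ (G x₀)) := mul_le_mul_of_nonneg_left (hGiter k _ _) hW0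
      _ = W * ψ x₀ (G x₀) * c ^ k := by ring
  obtain ⟨p, hp⟩ := cauchySeq_tendsto_of_complete hcauchy
  have hLip : LipschitzWith (Real.toNNReal (W * c)) G := by
    refine LipschitzWith.of_dist_le_mul fun x y => ?_
    rw [Real.coe_toNNReal _ (mul_nonneg hW0 hc0)]
    calc dist (G x) (G y) ≤ W * ψ (G x) (G y) := hdistW _ _
      _ ≤ W * (c * ψ x y) := mul_le_mul_of_nonneg_left (hGψ x y) hW0
      _ ≤ W * (c * dist x y) :=
          mul_le_mul_of_nonneg_left (mul_le_mul_of_nonneg_left (hψdist x y) hc0) hW0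
      _ = W * c * dist x y := by ring
  have hGp : G p = p := by
    have h1 : Tendsto (fun k => G^[k + 1] x₀) atTop (nhds (G p)) := by
      have := (hLip.continuous.tendsto p).comp hp
      simpa [Function.comp_def, Function.iterate_succ_apply'] using this
    have h2 : Tendsto (fun k => G^[k + 1] x₀) atTop (nhds p) :=
      hp.comp (tendsto_add_atTop_nat 1)
    exact tendsto_nhds_unique h1 h2
  refine ⟨p, hGp, ?_, ?_⟩
  · -- global attraction for G itself
    intro x
    rw [tendsto_iff_dist_tendsto_zero]
    have hb : ∀ k : ℕ, dist (G^[k] x) p ≤ W * ψ x p * c ^ k := by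
      intro k
      have hfix : G^[k] p = p := Function.iterate_fixed hGp k
      calc dist (G^[k] x) p = dist (G^[k] x) (G^[k] p) := by rw [hfix]
        _ ≤ W * ψ (G^[k] x) (G^[k] p) := hdistW _ _
        _ ≤ W * (c ^ k * ψ x p) := mul_le_mul_of_nonneg_left (hGiter k _ _) hW0
        _ = W * ψ x p * c ^ k := by ring
    refine squeeze_zero (fun k => dist_nonneg) hb ?_
    have := (tendsto_pow_atTop_nhds_zero_of_lt_one hc0 hc1).const_mul (W * ψ x p)
    simpa using this
  · -- delayed orbits
    intro u hu
    have hrangeT : (Finset.range T).Nonempty := ⟨0, Finset.mem_range.mpr hT⟩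
    set md : ℕ → ℝ := fun t => ψ (u t) p with hmddef
    have hmd0 : ∀ t, 0 ≤ md t := fun t => hψ0 _ _
    have key : ∀ k, md (k + T) ≤
        c * (Finset.range T).sup' hrangeT (fun s => md (k + s)) := by
      intro k
      set S : ℝ := (Finset.range T).sup' hrangeT (fun s => md (k + s)) with hSdef
      have hS0 : 0 ≤ S :=
        le_trans (hmd0 (k + 0)) (Finset.le_sup' (fun s => md (k + s)) (Finset.mem_range.mpr hT))
      refine Finset.sup'_le _ _ fun j _ => ?_
      rw [div_le_iff₀ (hw0 j)]
      have hrec : u (k + T) j = G (fun i => u (k + T - 1 - τ i j) i) j := hu k j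
      calc dist (u (k + T) j) (p j)
          = dist (G (fun i => u (k + T - 1 - τ i j) i) j) (G p j) := by rw [hrec, hGp]
        _ ≤ ∑ i, Λ i j * dist (u (k + T - 1 - τ i j) i) (p i) := hG _ p j
        _ ≤ ∑ i, Λ i j * (w i * S) := by
            refine Finset.sum_le_sum fun i _ => mul_le_mul_of_nonneg_left ?_ (hΛ0 i j)
            have hidx : k + T - 1 - τ i j = k + (T - 1 - τ i j) := by
              have := hτ i j
              omega
            have hmem : T - 1 - τ i j ∈ Finset.range T := Finset.mem_range.mpr (by omega)
            have hle : md (k + (T - 1 - τ i j)) ≤ S :=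
              Finset.le_sup' (fun s => md (k + s)) hmem
            calc dist (u (k + T - 1 - τ i j) i) (p i)
                ≤ w i * ψ (u (k + T - 1 - τ i j)) p := hdistψ _ _ i
              _ = w i * md (k + (T - 1 - τ i j)) := by rw [hmddef, hidx]
              _ ≤ w i * S := mul_le_mul_of_nonneg_left hle (hw0 i).le
        _ = (∑ i, Λ i j * w i) * S := by rw [Finset.sum_mul]; simp [mul_assoc]
        _ ≤ c * w j * S := mul_le_mul_of_nonneg_right (hwc' j) hS0
        _ = c * S * w j := by ring
    set M0 : ℝ := (Finset.range T).sup' hrangeT md with hM0def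
    have hM0 : 0 ≤ M0 := le_trans (hmd0 0) (Finset.le_sup' md (Finset.mem_range.mpr hT))
    have hA : ∀ t, md t ≤ M0 := by
      intro t
      induction t using Nat.strong_induction_on with
      | _ t ih =>
        by_cases ht : t < T
        · exact Finset.le_sup' md (Finset.mem_range.mpr ht)
        · push_neg at ht
          have ht' : t = t - T + T := by omega
          rw [ht']
          refine le_trans (key (t - T)) ?_
          have hsup : (Finset.range T).sup' hrangeT (fun s => md (t - T + s)) ≤ M0 := by
            refine Finset.sup'_le _ _ fun s hs => ?_
            have hs' : s < T := Finset.mem_range.mp hs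
            exact ih (t - T + s) (by omega)
          nlinarith
    have hBnd : ∀ r t, r * T ≤ t → md t ≤ c ^ r * M0 := by
      intro r
      induction r with
      | zero => intro t _; simpa using hA t
      | succ r ih =>
        intro t ht
        have h1 : r * T + T ≤ t := by
          have : (r + 1) * T = r * T + T := by ring
          omega
        have ht' : t = t - T + T := by omega
        rw [ht']
        refine le_trans (key (t - T)) ?_
        have hsup : (Finset.range T).sup' hrangeT (fun s => md (t - T + s)) ≤ c ^ r * M0 := by
          refine Finset.sup'_le _ _ fun s hs => ?_
          exact ih (t - T + s) (by omega)
        calc c * (Finset.range T).sup' hrangeT (fun s => md (t - T + s))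
            ≤ c * (c ^ r * M0) := mul_le_mul_of_nonneg_left hsup hc0
          _ = c ^ (r + 1) * M0 := by ring
    rw [tendsto_iff_dist_tendsto_zero]
    have hbound : ∀ t, dist (u t) p ≤ W * (c ^ (t / T) * M0) := by
      intro t
      calc dist (u t) p ≤ W * ψ (u t) p := hdistW _ _
        _ ≤ W * (c ^ (t / T) * M0) :=
          mul_le_mul_of_nonneg_left (hBnd (t / T) t (Nat.div_mul_le_self t T)) hW0
    refine squeeze_zero (fun t => dist_nonneg) hbound ?_
    have hdiv : Tendsto (fun t : ℕ => t / T) atTop atTop := by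
      refine tendsto_atTop_atTop.mpr fun b => ⟨b * T, fun t ht => ?_⟩
      exact (Nat.le_div_iff_mul_le (by omega)).mpr ht
    have h1 : Tendsto (fun t : ℕ => c ^ (t / T)) atTop (nhds 0) :=
      (tendsto_pow_atTop_nhds_zero_of_lt_one hc0 hc1).comp hdiv
    have := (h1.mul_const M0).const_mul W
    simpa using this
end

section
/- Let a, b, ε, c₁, c₂ be real numbers with |1 − ε| + 2|ab| < 1. Then there exists (x̃₁, x̃₂) ∈ ℝ² with x̃₁ = (1 − ε)·x̃₁ + 2a·tanh(b·x̃₂) + c₁ and x̃₂ = (1 − ε)·x̃₂ + 2a·tanh(b·x̃₁) + c₂, such that every pair of sequences u₁, u₂ : ℕ → ℝ satisfying u₁(k+4) = (1 − ε)·u₁(k+2) + 2a·tanh(b·u₂(k)) + c₁ and u₂(k+4) = (1 − ε)·u₂(k+2) + 2a·tanh(b·u₁(k)) + c₂ for all k ≥ 0 (with arbitrary initial values u₁(0),…,u₁(3), u₂(0),…,u₂(3)) converges to (x̃₁, x̃₂), i.e. u₁(k) → x̃₁ and u₂(k) → x̃₂ as k → ∞. -/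
open Filter

lemma tanh_hasDerivAt (x : ℝ) :
    HasDerivAt Real.tanh (1 / Real.cosh x ^ 2) x := by
  have hc : Real.cosh x ≠ 0 := (Real.cosh_pos x).ne'
  have h := (Real.hasDerivAt_sinh x).div (Real.hasDerivAt_cosh x) hc
  have heq : (Real.cosh x * Real.cosh x - Real.sinh x * Real.sinh x) / Real.cosh x ^ 2
      = 1 / Real.cosh x ^ 2 := by
    have := Real.cosh_sq_sub_sinh_sq x
    field_simp
    nlinarith [this]
  have hfun : (fun y => Real.sinh y / Real.cosh y) = Real.tanh := by
    funext y; rw [Real.tanh_eq_sinh_div_cosh]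
  rw [show (Real.sinh / Real.cosh) = Real.tanh from hfun, heq] at h
  exact h

lemma tanh_dist_s8 (x y : ℝ) : |Real.tanh x - Real.tanh y| ≤ |x - y| := by
  have := tanh_lipschitz.dist_le_mul x y
  simpa [Real.dist_eq] using this

/-- Stability of the time-delayed two-element Cohen–Grossberg network
`x₁^{k+4} = (1−ε)x₁^{k+2} + 2a·tanh(b x₂^k) + c₁`,
`x₂^{k+4} = (1−ε)x₂^{k+2} + 2a·tanh(b x₁^k) + c₂`:
if `|1 − ε| + 2|ab| < 1` then there is a fixed point to which every orbit converges. -/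
theorem delayed_two_element_network_stability
    (a b ε c₁ c₂ : ℝ) (hρ : |1 - ε| + 2 * |a * b| < 1) :
    ∃ p₁ p₂ : ℝ,
      p₁ = (1 - ε) * p₁ + 2 * a * Real.tanh (b * p₂) + c₁ ∧
      p₂ = (1 - ε) * p₂ + 2 * a * Real.tanh (b * p₁) + c₂ ∧
      ∀ u₁ u₂ : ℕ → ℝ,
        (∀ k, u₁ (k + 4) = (1 - ε) * u₁ (k + 2) + 2 * a * Real.tanh (b * u₂ k) + c₁) →
        (∀ k, u₂ (k + 4) = (1 - ε) * u₂ (k + 2) + 2 * a * Real.tanh (b * u₁ k) + c₂) →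
        Tendsto u₁ atTop (nhds p₁) ∧ Tendsto u₂ atTop (nhds p₂) := by
  set ρ : ℝ := |1 - ε| + 2 * |a * b| with hρdef
  have hρ0 : 0 ≤ ρ := by positivity
  -- key estimate used everywhere
  have key : ∀ x x' y y' : ℝ,
      |((1 - ε) * x + 2 * a * Real.tanh (b * y) + c₁) -
       ((1 - ε) * x' + 2 * a * Real.tanh (b * y') + c₁)| ≤
      ρ * max |x - x'| |y - y'| := by
    intro x x' y y'
    have h1 : ((1 - ε) * x + 2 * a * Real.tanh (b * y) + c₁) -
        ((1 - ε) * x' + 2 * a * Real.tanh (b * y') + c₁)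
        = (1 - ε) * (x - x') + 2 * a * (Real.tanh (b * y) - Real.tanh (b * y')) := by
      ring
    rw [h1]
    have h2 : |(1 - ε) * (x - x') + 2 * a * (Real.tanh (b * y) - Real.tanh (b * y'))|
        ≤ |1 - ε| * |x - x'| + 2 * |a| * |Real.tanh (b * y) - Real.tanh (b * y')| := by
      calc _ ≤ |(1 - ε) * (x - x')| + |2 * a * (Real.tanh (b * y) - Real.tanh (b * y'))| :=
              abs_add_le _ _
        _ = |1 - ε| * |x - x'| + 2 * |a| * |Real.tanh (b * y) - Real.tanh (b * y')| := by
              rw [abs_mul, abs_mul, abs_mul]; norm_num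
    have h3 : |Real.tanh (b * y) - Real.tanh (b * y')| ≤ |b| * |y - y'| := by
      have := tanh_dist_s8 (b * y) (b * y')
      calc |Real.tanh (b * y) - Real.tanh (b * y')| ≤ |b * y - b * y'| := this
        _ = |b| * |y - y'| := by rw [← abs_mul]; ring_nf
    have hxm : |x - x'| ≤ max |x - x'| |y - y'| := le_max_left _ _
    have hym : |y - y'| ≤ max |x - x'| |y - y'| := le_max_right _ _
    have hM0 : (0:ℝ) ≤ max |x - x'| |y - y'| := le_trans (abs_nonneg _) hxm
    calc |(1 - ε) * (x - x') + 2 * a * (Real.tanh (b * y) - Real.tanh (b * y'))|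
        ≤ |1 - ε| * |x - x'| + 2 * |a| * (|b| * |y - y'|) := by
          refine h2.trans ?_
          have := mul_le_mul_of_nonneg_left h3 (by positivity : (0:ℝ) ≤ 2 * |a|)
          linarith
      _ ≤ |1 - ε| * max |x - x'| |y - y'| + 2 * |a * b| * max |x - x'| |y - y'| := by
          have hab : |a * b| = |a| * |b| := abs_mul a b
          have t1 := mul_le_mul_of_nonneg_left hxm (abs_nonneg (1 - ε))
          have t2 := mul_le_mul_of_nonneg_left hym (by positivity : (0:ℝ) ≤ 2 * |a| * |b|)
          rw [hab]; nlinarith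
      _ = ρ * max |x - x'| |y - y'| := by rw [hρdef]; ring
  -- fixed point via Banach
  set F : ℝ × ℝ → ℝ × ℝ := fun p =>
    ((1 - ε) * p.1 + 2 * a * Real.tanh (b * p.2) + c₁,
     (1 - ε) * p.2 + 2 * a * Real.tanh (b * p.1) + c₂) with hF
  have hlip : LipschitzWith ρ.toNNReal F := by
    apply LipschitzWith.of_dist_le_mul
    intro p q
    rw [Prod.dist_eq, Real.coe_toNNReal _ hρ0]
    have hd1 : dist (F p).1 (F q).1 ≤ ρ * max |p.1 - q.1| |p.2 - q.2| := by
      rw [Real.dist_eq]; exact key p.1 q.1 p.2 q.2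
    have hd2 : dist (F p).2 (F q).2 ≤ ρ * max |p.1 - q.1| |p.2 - q.2| := by
      rw [Real.dist_eq]
      have := key p.2 q.2 p.1 q.1
      have h21 : ((1 - ε) * p.2 + 2 * a * Real.tanh (b * p.1) + c₂) -
          ((1 - ε) * q.2 + 2 * a * Real.tanh (b * q.1) + c₂)
          = ((1 - ε) * p.2 + 2 * a * Real.tanh (b * p.1) + c₁) -
          ((1 - ε) * q.2 + 2 * a * Real.tanh (b * q.1) + c₁) := by ring
      rw [show (F p).2 - (F q).2 = ((1 - ε) * p.2 + 2 * a * Real.tanh (b * p.1) + c₁) -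
          ((1 - ε) * q.2 + 2 * a * Real.tanh (b * q.1) + c₁) by simp only [hF]; ring]
      calc _ ≤ ρ * max |p.2 - q.2| |p.1 - q.1| := this
        _ = ρ * max |p.1 - q.1| |p.2 - q.2| := by rw [max_comm]
    have hmax : max |p.1 - q.1| |p.2 - q.2| = dist p q := by
      rw [Prod.dist_eq, Real.dist_eq, Real.dist_eq]
    rw [hmax] at hd1 hd2
    exact max_le hd1 hd2
  have hcontr : ContractingWith ρ.toNNReal F := by
    constructor
    · rw [← NNReal.coe_lt_coe, Real.coe_toNNReal _ hρ0, NNReal.coe_one]; exact hρ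
    · exact hlip
  set p : ℝ × ℝ := ContractingWith.fixedPoint F hcontr with hpdef
  have hfix : F p = p := hcontr.fixedPoint_isFixedPt
  refine ⟨p.1, p.2, ?_, ?_, ?_⟩
  · conv_lhs => rw [← hfix]
  · conv_lhs => rw [← hfix]
  intro u₁ u₂ h₁ h₂
  have hfix1 : p.1 = (1 - ε) * p.1 + 2 * a * Real.tanh (b * p.2) + c₁ := by
    conv_lhs => rw [← hfix]
  have hfix2 : p.2 = (1 - ε) * p.2 + 2 * a * Real.tanh (b * p.1) + c₂ := by
    conv_lhs => rw [← hfix]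
  set e : ℕ → ℝ := fun n => max |u₁ n - p.1| |u₂ n - p.2| with he
  set E : ℕ → ℝ := fun n => max (e n) (e (n + 2)) with hE
  have he0 : ∀ n, 0 ≤ e n := fun n => le_trans (abs_nonneg _) (le_max_left _ _)
  have hE0 : ∀ n, 0 ≤ E n := fun n => le_trans (he0 n) (le_max_left _ _)
  have heE : ∀ n, e n ≤ E n := fun n => le_max_left _ _
  have he2E : ∀ n, e (n + 2) ≤ E n := fun n => le_max_right _ _
  -- one-step estimate
  have step : ∀ n, e (n + 4) ≤ ρ * E n := by
    intro n
    have hb1 : |u₁ (n + 4) - p.1| ≤ ρ * max |u₁ (n + 2) - p.1| |u₂ n - p.2| := by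
      rw [h₁ n]; conv_lhs => rw [hfix1]
      exact key (u₁ (n + 2)) p.1 (u₂ n) p.2
    have hb2 : |u₂ (n + 4) - p.2| ≤ ρ * max |u₂ (n + 2) - p.2| |u₁ n - p.1| := by
      rw [h₂ n]; conv_lhs => rw [hfix2]
      have := key (u₂ (n + 2)) p.2 (u₁ n) p.1
      calc |((1 - ε) * u₂ (n + 2) + 2 * a * Real.tanh (b * u₁ n) + c₂) -
            ((1 - ε) * p.2 + 2 * a * Real.tanh (b * p.1) + c₂)|
          = |((1 - ε) * u₂ (n + 2) + 2 * a * Real.tanh (b * u₁ n) + c₁) -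
            ((1 - ε) * p.2 + 2 * a * Real.tanh (b * p.1) + c₁)| := by ring_nf
        _ ≤ ρ * max |u₂ (n + 2) - p.2| |u₁ n - p.1| := this
    have hm1 : max |u₁ (n + 2) - p.1| |u₂ n - p.2| ≤ E n :=
      max_le (le_trans (le_max_left _ _) (he2E n)) (le_trans (le_max_right _ _) (heE n))
    have hm2 : max |u₂ (n + 2) - p.2| |u₁ n - p.1| ≤ E n :=
      max_le (le_trans (le_max_right _ _) (he2E n)) (le_trans (le_max_left _ _) (heE n))
    exact max_le (hb1.trans (mul_le_mul_of_nonneg_left hm1 hρ0))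
      (hb2.trans (mul_le_mul_of_nonneg_left hm2 hρ0))
  have hEmono : ∀ n, E (n + 2) ≤ E n := by
    intro n
    refine max_le (he2E n) ?_
    calc e (n + 2 + 2) = e (n + 4) := by norm_num
      _ ≤ ρ * E n := step n
      _ ≤ 1 * E n := mul_le_mul_of_nonneg_right (le_of_lt hρ) (hE0 n)
      _ = E n := one_mul _
  have hEstep : ∀ n, E (n + 4) ≤ ρ * E n := by
    intro n
    refine max_le (step n) ?_
    calc e (n + 4 + 2) = e ((n + 2) + 4) := by ring_nf
      _ ≤ ρ * E (n + 2) := step (n + 2)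
      _ ≤ ρ * E n := mul_le_mul_of_nonneg_left (hEmono n) hρ0
  have hiter : ∀ m r, E (4 * m + r) ≤ ρ ^ m * E r := by
    intro m
    induction m with
    | zero => intro r; simp
    | succ m ih =>
      intro r
      have : 4 * (m + 1) + r = (4 * m + r) + 4 := by ring
      rw [this]
      calc E ((4 * m + r) + 4) ≤ ρ * E (4 * m + r) := hEstep _
        _ ≤ ρ * (ρ ^ m * E r) := mul_le_mul_of_nonneg_left (ih r) hρ0
        _ = ρ ^ (m + 1) * E r := by ring
  set C : ℝ := max (max (E 0) (E 1)) (max (E 2) (E 3)) with hC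
  have hCr : ∀ r, r < 4 → E r ≤ C := by
    intro r hr
    interval_cases r
    · exact le_trans (le_max_left _ _) (le_max_left _ _)
    · exact le_trans (le_max_right _ _) (le_max_left _ _)
    · exact le_trans (le_max_left _ _) (le_max_right _ _)
    · exact le_trans (le_max_right _ _) (le_max_right _ _)
  have hbound : ∀ n, E n ≤ ρ ^ (n / 4) * C := by
    intro n
    have hn : 4 * (n / 4) + n % 4 = n := by omega
    calc E n = E (4 * (n / 4) + n % 4) := by rw [hn]
      _ ≤ ρ ^ (n / 4) * E (n % 4) := hiter _ _
      _ ≤ ρ ^ (n / 4) * C :=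
          mul_le_mul_of_nonneg_left (hCr _ (Nat.mod_lt _ (by norm_num))) (by positivity)
  have hdiv : Tendsto (fun n : ℕ => n / 4) atTop atTop := by
    apply tendsto_atTop_atTop.2
    intro N
    exact ⟨4 * N, fun n hn => Nat.le_div_iff_mul_le (by norm_num) |>.2 (by omega)⟩
  have hg0 : Tendsto (fun n : ℕ => ρ ^ (n / 4) * C) atTop (nhds 0) := by
    have := (tendsto_pow_atTop_nhds_zero_of_lt_one hρ0 hρ).comp hdiv
    have h0 := this.mul_const C
    simpa using h0
  have conv : ∀ (v : ℕ → ℝ) (q : ℝ), (∀ n, |v n - q| ≤ E n) → Tendsto v atTop (nhds q) := by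
    intro v q hv
    rw [tendsto_iff_dist_tendsto_zero]
    apply squeeze_zero (fun n => dist_nonneg)
      (g := fun n => ρ ^ (n / 4) * C) ?_ hg0
    intro n
    rw [Real.dist_eq]
    exact le_trans (hv n) (hbound n)
  constructor
  · exact conv u₁ p.1 (fun n => le_trans (le_max_left _ _) (heE n))
  · exact conv u₂ p.2 (fun n => le_trans (le_max_right _ _) (heE n))
end

section
/- Let n ≥ 1, let M be an n×n real matrix, fix indices ℓ, m and reals α, 𝓛 with α + 𝓛 = M_{ℓm}, let θ ∈ ℝ, and let λ be a nonzero real number. Then det(M_θ − λ·I_{n+1}) = −λ · det(M̃_θ(λ) − λ·I_n), where M̃_θ(λ) is the n×n matrix that agrees with M in every entry except that its (ℓ, m) entry equals α·θ/λ + 𝓛. -/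
/-- The modified matrix `M_θ(α, 𝓛) ∈ ℝ^{(n+1)×(n+1)}`: rows and columns are indexed by
`{0, 1, …, n}` (index `i.succ` corresponding to the original index `i`), the entry
`(ℓ, m)` of `M` is replaced by `𝓛`, the entry `(0, m)` is `α`, the entry `(ℓ, 0)` is
`θ`, and all other entries involving the new index `0` are `0`. -/
def modMat {n : ℕ} (M : Matrix (Fin n) (Fin n) ℝ) (l m : Fin n) (α 𝓛 θ : ℝ) :
    Matrix (Fin (n + 1)) (Fin (n + 1)) ℝ :=
  Matrix.of fun i j =>
    if hi : i = 0 then (if j = m.succ then α else 0)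
    else if hj : j = 0 then (if i = l.succ then θ else 0)
    else if i = l.succ ∧ j = m.succ then 𝓛
    else M (i.pred hi) (j.pred hj)

/-- For nonzero `λ`, `det(M_θ − λ·I_{n+1}) = −λ · det(M̃_θ(λ) − λ·I_n)` where `M̃_θ(λ)`
agrees with `M` except that its `(ℓ, m)` entry is `α·θ/λ + 𝓛`. -/
theorem det_modMat_sub_smul_one
    {n : ℕ} (hn : 1 ≤ n) (M : Matrix (Fin n) (Fin n) ℝ)
    (l m : Fin n) (α 𝓛 : ℝ) (hsum : α + 𝓛 = M l m)
    (θ : ℝ) (lam : ℝ) (hlam : lam ≠ 0) :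
    (modMat M l m α 𝓛 θ - lam • (1 : Matrix (Fin (n + 1)) (Fin (n + 1)) ℝ)).det =
      -lam *
        ((Matrix.of fun i j => if i = l ∧ j = m then α * θ / lam + 𝓛 else M i j) -
          lam • (1 : Matrix (Fin n) (Fin n) ℝ)).det := by
  set A := modMat M l m α 𝓛 θ - lam • (1 : Matrix (Fin (n + 1)) (Fin (n + 1)) ℝ) with hA
  rw [← Matrix.det_updateRow_add_smul_self A (Fin.succ_ne_zero l) (θ / lam)]
  set B := A.updateRow l.succ (A l.succ + (θ / lam) • A 0) with hB
  have hA0 : ∀ j, A 0 j = (if j = m.succ then α else 0) - lam * (if (0:Fin (n+1)) = j then 1 else 0) := by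
    intro j
    simp [hA, modMat, Matrix.sub_apply, Matrix.smul_apply, Matrix.one_apply]
  have hBcol : ∀ i : Fin (n+1), i ≠ 0 → B i 0 = 0 := by
    intro i hi
    by_cases hil : i = l.succ
    · subst hil
      rw [hB, Matrix.updateRow_self]
      have h1 : A l.succ 0 = θ := by
        simp [hA, modMat, Matrix.sub_apply, Matrix.smul_apply, Matrix.one_apply,
          (Fin.succ_ne_zero l), (Fin.succ_ne_zero l).symm]
      have h2 : A 0 0 = -lam := by
        simp [hA0, (Fin.succ_ne_zero m).symm]
      simp only [Pi.add_apply, Pi.smul_apply, h1, h2, smul_eq_mul]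
      field_simp
      ring
    · rw [hB, Matrix.updateRow_ne hil]
      simp [hA, modMat, Matrix.sub_apply, Matrix.smul_apply, Matrix.one_apply, hi, hil, hi.symm]
  rw [Matrix.det_succ_column_zero]
  rw [Finset.sum_eq_single 0]
  · have hB00 : B 0 0 = -lam := by
      rw [hB, Matrix.updateRow_ne (Fin.succ_ne_zero l).symm]
      simp [hA0, (Fin.succ_ne_zero m).symm]
    rw [hB00, Fin.succAbove_zero]
    have hsub : B.submatrix Fin.succ Fin.succ =
        ((Matrix.of fun i j => if i = l ∧ j = m then α * θ / lam + 𝓛 else M i j) -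
          lam • (1 : Matrix (Fin n) (Fin n) ℝ)) := by
      ext i j
      simp only [Matrix.submatrix_apply, Matrix.sub_apply, Matrix.smul_apply,
        Matrix.one_apply, Matrix.of_apply, smul_eq_mul]
      by_cases hil : i = l
      · subst hil
        rw [hB, Matrix.updateRow_self]
        simp only [Pi.add_apply, Pi.smul_apply, smul_eq_mul, hA0]
        have hAl : A i.succ j.succ =
            (if i = i ∧ j = m then 𝓛 else M i j) - lam * (if i = j then 1 else 0) := by
          simp [hA, modMat, Matrix.sub_apply, Matrix.smul_apply, Matrix.one_apply,
            Fin.succ_ne_zero, Fin.succ_inj, Fin.pred_succ]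
        rw [hAl]
        by_cases hjm : j = m
        · subst hjm
          simp only [Fin.succ_inj, and_self, if_pos rfl, if_pos trivial,
            (Fin.succ_ne_zero j).symm, if_neg (Fin.succ_ne_zero j).symm]
          simp only [if_false]
          field_simp
          split_ifs <;> ring
        · have h2 : j.succ ≠ m.succ := by simp [Fin.succ_inj, hjm]
          simp only [hjm, and_false, if_false, if_neg h2,
            if_neg (Fin.succ_ne_zero j).symm]
          ring
      · rw [hB, Matrix.updateRow_ne (by simp [Fin.succ_inj, hil])]
        have h1 : ¬ (i = l ∧ j = m) := by tauto
        simp [hA, modMat, Matrix.sub_apply, Matrix.smul_apply, Matrix.one_apply,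
          Fin.succ_ne_zero, Fin.succ_inj, Fin.pred_succ, hil, h1]
    rw [hsub]
    simp only [Fin.val_zero, pow_zero, one_mul]
  · intro i _ hi
    rw [hBcol i hi]
    ring
  · simp
end

section
/- Let n ≥ 1, let M be a nonnegative irreducible n×n real matrix, and fix indices ℓ, m and reals α > 0, 𝓛 ≥ 0 with α + 𝓛 = M_{ℓm}. Then for θ = ρ(M): the number ρ(M) is an eigenvalue of the modified matrix M_{ρ(M)} (i.e., det(M_{ρ(M)} − ρ(M)·I_{n+1}) = 0), and moreover ρ(M_{ρ(M)}) = ρ(M). -/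
lemma PF.mem_spectrum_iff {N : ℕ} (B : Matrix (Fin N) (Fin N) ℂ) (μ : ℂ) :
    μ ∈ spectrum ℂ B ↔ ∃ v, v ≠ 0 ∧ B.mulVec v = μ • v := by
  rw [spectrum.mem_iff, Algebra.algebraMap_eq_smul_one, Matrix.isUnit_iff_isUnit_det,
    isUnit_iff_ne_zero, not_ne_iff, ← Matrix.exists_mulVec_eq_zero_iff]
  constructor
  · rintro ⟨v, hv, h⟩
    refine ⟨v, hv, ?_⟩
    have := h
    rw [Matrix.sub_mulVec, Matrix.smul_mulVec, Matrix.one_mulVec, sub_eq_zero] at this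
    exact this.symm
  · rintro ⟨v, hv, h⟩
    exact ⟨v, hv, by rw [Matrix.sub_mulVec, Matrix.smul_mulVec, Matrix.one_mulVec, h,
      sub_self]⟩

lemma PF.map_mulVec_real {N : ℕ} (B : Matrix (Fin N) (Fin N) ℝ) (v : Fin N → ℝ) :
    (B.map (fun x => (x : ℂ))).mulVec (fun i => (v i : ℂ)) = fun i => ((B.mulVec v i : ℝ) : ℂ) := by
  funext i
  simp [Matrix.mulVec, dotProduct, Matrix.map_apply]

lemma PF.row_abs_le {N : ℕ} {B : Matrix (Fin N) (Fin N) ℝ} (hB : ∀ i j, 0 ≤ B i j)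
    (v : Fin N → ℂ) (i : Fin N) :
    ‖(B.map (fun x => (x : ℂ))).mulVec v i‖ ≤ ∑ k, B i k * ‖v k‖ := by
  have : (B.map (fun x => (x : ℂ))).mulVec v i = ∑ k, (B i k : ℂ) * v k := by
    simp [Matrix.mulVec, dotProduct, Matrix.map_apply]
  rw [this]
  refine le_trans (norm_sum_le _ _) ?_
  refine le_of_eq (Finset.sum_congr rfl fun k _ => ?_)
  rw [norm_mul, Complex.norm_real, Real.norm_eq_abs, abs_of_nonneg (hB i k)]

/-- eigenvalue modulus bound from a positive eigenvector of a nonnegative matrix -/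

lemma PF.abs_le_of_pos_eigenvector {N : ℕ} {B : Matrix (Fin N) (Fin N) ℝ}
    (hB : ∀ i j, 0 ≤ B i j) {w : Fin N → ℝ} (hw : ∀ i, 0 < w i) {r : ℝ}
    (hr : B.mulVec w = r • w) {μ : ℂ}
    (hμ : μ ∈ spectrum ℂ (B.map (fun x => (x : ℂ)))) : ‖μ‖ ≤ r := by
  obtain ⟨v, hv, hvec⟩ := (PF.mem_spectrum_iff _ μ).mp hμ
  obtain ⟨j, hj⟩ : ∃ j, v j ≠ 0 := by
    by_contra h
    push_neg at h
    exact hv (funext fun i => h i)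
  obtain ⟨i0, -, hi0⟩ := Finset.exists_max_image Finset.univ
    (fun i => ‖v i‖ / w i) ⟨j, Finset.mem_univ j⟩
  set t : ℝ := ‖v i0‖ / w i0 with ht
  have htpos : 0 < t := lt_of_lt_of_le
    (div_pos (by simpa using hj) (hw j)) (hi0 j (Finset.mem_univ j))
  have hvi0 : ‖v i0‖ = t * w i0 := by
    rw [ht, div_mul_eq_mul_div, mul_div_assoc, div_self (hw i0).ne', mul_one]
  have hle : ∀ i, ‖v i‖ ≤ t * w i := by
    intro i
    have h1 := hi0 i (Finset.mem_univ i)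
    have h2 : ‖v i‖ = (‖v i‖ / w i) * w i := by
      rw [div_mul_eq_mul_div, mul_div_assoc, div_self (hw i).ne', mul_one]
    rw [h2]
    exact mul_le_mul_of_nonneg_right h1 (hw i).le
  have key : ‖μ‖ * (t * w i0) ≤ r * (t * w i0) := by
    have h1 : ‖μ‖ * ‖v i0‖ = ‖(μ • v) i0‖ := by
      simp
    calc ‖μ‖ * (t * w i0) = ‖(μ • v) i0‖ := by rw [← hvi0, h1]
    _ = ‖(B.map (fun x => (x : ℂ))).mulVec v i0‖ := by rw [hvec]
    _ ≤ ∑ k, B i0 k * ‖v k‖ := PF.row_abs_le hB v i0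
    _ ≤ ∑ k, B i0 k * (t * w k) := by
      refine Finset.sum_le_sum fun k _ => mul_le_mul_of_nonneg_left (hle k) (hB i0 k)
    _ = t * B.mulVec w i0 := by
      simp only [Matrix.mulVec, dotProduct, Finset.mul_sum]
      exact Finset.sum_congr rfl fun k _ => by ring
    _ = r * (t * w i0) := by rw [hr]; simp [Pi.smul_apply]; ring
  exact le_of_mul_le_mul_right key (mul_pos htpos (hw i0))

/-- subinvariant nonnegative vector from any eigenvalue -/

lemma PF.exists_subinvariant {N : ℕ} {B : Matrix (Fin N) (Fin N) ℝ}
    (hB : ∀ i j, 0 ≤ B i j) {μ : ℂ}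
    (hμ : μ ∈ spectrum ℂ (B.map (fun x => (x : ℂ)))) :
    ∃ w : Fin N → ℝ, (∀ i, 0 ≤ w i) ∧ w ≠ 0 ∧
      ∀ i, ‖μ‖ * w i ≤ B.mulVec w i := by
  obtain ⟨v, hv, hvec⟩ := (PF.mem_spectrum_iff _ μ).mp hμ
  refine ⟨fun i => ‖v i‖, fun i => norm_nonneg _, ?_, ?_⟩
  · intro h
    apply hv
    funext i
    have := congrFun h i
    simpa using this
  · intro i
    calc ‖μ‖ * ‖v i‖ = ‖(μ • v) i‖ := by simp
    _ = ‖(B.map (fun x => (x : ℂ))).mulVec v i‖ := by rw [hvec]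
    _ ≤ ∑ k, B i k * ‖v k‖ := PF.row_abs_le hB v i
    _ = B.mulVec (fun k => ‖v k‖) i := by
      simp [Matrix.mulVec, dotProduct]

lemma PF.specRad_spec {n : ℕ} (hn : 1 ≤ n) (M : Matrix (Fin n) (Fin n) ℝ) :
    (∃ μ ∈ spectrum ℂ (M.map (fun x => (x : ℂ))), ‖μ‖ = specRad M) ∧
    (∀ μ ∈ spectrum ℂ (M.map (fun x => (x : ℂ))), ‖μ‖ ≤ specRad M) := by
  haveI : Nonempty (Fin n) := ⟨⟨0, hn⟩⟩
  set A := M.map (fun x => (x : ℂ))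
  have hne : (spectrum ℂ A).Nonempty :=
    spectrum.nonempty_of_isAlgClosed_of_finiteDimensional ℂ A
  have hfin : ((fun μ => ‖μ‖) '' spectrum ℂ A).Finite :=
    (Matrix.finite_spectrum A).image _
  have hSne : ((fun μ => ‖μ‖) '' spectrum ℂ A).Nonempty := hne.image _
  have hmem := hSne.csSup_mem hfin
  constructor
  · obtain ⟨μ, hμ, h⟩ := hmem
    exact ⟨μ, hμ, h⟩
  · intro μ hμ
    exact le_csSup hfin.bddAbove ⟨μ, hμ, rfl⟩

lemma PF.specRad_nonneg {n : ℕ} (hn : 1 ≤ n) (M : Matrix (Fin n) (Fin n) ℝ) :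
    0 ≤ specRad M := by
  obtain ⟨⟨μ, _, h⟩, -⟩ := PF.specRad_spec hn M
  rw [← h]; exact norm_nonneg _

lemma PF.pow_entry_nonneg {n : ℕ} {M : Matrix (Fin n) (Fin n) ℝ}
    (hM0 : ∀ i j, 0 ≤ M i j) (k : ℕ) : ∀ i j, 0 ≤ (M ^ k) i j := by
  induction k with
  | zero => intro i j; by_cases h : i = j <;> simp [Matrix.one_apply, h]
  | succ k ih =>
    intro i j
    rw [pow_succ, Matrix.mul_apply]
    exact Finset.sum_nonneg fun t _ => mul_nonneg (ih i t) (hM0 t j)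

lemma PF.mulVec_mono {n : ℕ} {M : Matrix (Fin n) (Fin n) ℝ}
    (hM0 : ∀ i j, 0 ≤ M i j) {u v : Fin n → ℝ} (h : ∀ i, u i ≤ v i) :
    ∀ i, M.mulVec u i ≤ M.mulVec v i := by
  intro i
  simp only [Matrix.mulVec, dotProduct]
  exact Finset.sum_le_sum fun j _ => mul_le_mul_of_nonneg_left (h j) (hM0 i j)

lemma PF.pow_mulVec_ge {n : ℕ} {M : Matrix (Fin n) (Fin n) ℝ}
    (hM0 : ∀ i j, 0 ≤ M i j) {y : Fin n → ℝ} (hy : ∀ i, 0 ≤ y i) {s : ℝ} (hs : 0 ≤ s)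
    (hsub : ∀ i, s * y i ≤ M.mulVec y i) :
    ∀ k i, s ^ k * y i ≤ (M ^ k).mulVec y i := by
  intro k
  induction k with
  | zero => intro i; simp [Matrix.one_mulVec]
  | succ k ih =>
    intro i
    have h1 : (M ^ (k + 1)).mulVec y = M.mulVec ((M ^ k).mulVec y) := by
      rw [pow_succ']
      rw [← Matrix.mulVec_mulVec]
    rw [h1]
    have h2 : ∀ i, (fun j => s ^ k * y j) i ≤ (M ^ k).mulVec y i := ih
    have h3 := PF.mulVec_mono hM0 h2 i
    have h4 : M.mulVec (fun j => s ^ k * y j) i = s ^ k * M.mulVec y i := by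
      simp [Matrix.mulVec, dotProduct, Finset.mul_sum]
      exact Finset.sum_congr rfl fun j _ => by ring
    calc s ^ (k + 1) * y i = s ^ k * (s * y i) := by ring
    _ ≤ s ^ k * M.mulVec y i := by
      exact mul_le_mul_of_nonneg_left (hsub i) (pow_nonneg hs k)
    _ = M.mulVec (fun j => s ^ k * y j) i := h4.symm
    _ ≤ M.mulVec ((M ^ k).mulVec y) i := h3

attribute [local instance] Matrix.linftyOpNormedAddCommGroup Matrix.linftyOpNormedRing
  Matrix.linftyOpNormedAlgebra

lemma PF.spectralRadius_eq {n : ℕ} (hn : 1 ≤ n) (M : Matrix (Fin n) (Fin n) ℝ) :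
    spectralRadius ℂ (M.map (fun x => (x : ℂ))) = ENNReal.ofReal (specRad M) := by
  obtain ⟨⟨μ0, hμ0, hμ0eq⟩, hub⟩ := PF.specRad_spec hn M
  rw [spectralRadius]
  apply le_antisymm
  · refine iSup₂_le fun μ hμ => ?_
    rw [← enorm_eq_nnnorm, ← ofReal_norm]
    exact ENNReal.ofReal_le_ofReal (hub μ hμ)
  · have h1 : ENNReal.ofReal (specRad M) = ((nnnorm μ0 : NNReal) : ENNReal) := by
      rw [← enorm_eq_nnnorm, ← ofReal_norm, hμ0eq]
    rw [h1]
    exact le_iSup₂ (f := fun (μ : ℂ) (_ : μ ∈ spectrum ℂ (M.map (fun x => (x : ℂ)))) =>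
      ((nnnorm μ : NNReal) : ENNReal)) μ0 hμ0

lemma PF.no_supercritical_vector {n : ℕ} (hn : 1 ≤ n) {M : Matrix (Fin n) (Fin n) ℝ}
    (hM0 : ∀ i j, 0 ≤ M i j) {y : Fin n → ℝ} (hy : ∀ i, 0 < y i) {s : ℝ}
    (hs : specRad M < s) (hsub : ∀ i, s * y i ≤ M.mulVec y i) : False := by
  haveI : Nonempty (Fin n) := ⟨⟨0, hn⟩⟩
  set ρ := specRad M with hρ
  have hρ0 : 0 ≤ ρ := PF.specRad_nonneg hn M
  have hs0 : 0 < s := lt_of_le_of_lt hρ0 hs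
  set s' : ℝ := (ρ + s) / 2 with hs'
  have hρs' : ρ < s' := by rw [hs']; linarith
  have hs's : s' < s := by rw [hs']; linarith
  have hs'0 : 0 < s' := lt_of_le_of_lt hρ0 hρs'
  set A := M.map (fun x => (x : ℂ)) with hA
  -- growth lower bound
  obtain ⟨jm, -, hjm⟩ := Finset.exists_max_image Finset.univ y ⟨⟨0, hn⟩, Finset.mem_univ _⟩
  set i0 : Fin n := ⟨0, hn⟩ with hi0
  set c : ℝ := y i0 / y jm with hc
  have hc0 : 0 < c := div_pos (hy i0) (hy jm)
  have hgrow : ∀ k, c * s ^ k ≤ ‖A ^ k‖ := by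
    intro k
    have hApow : A ^ k = (M ^ k).map (fun x => (x : ℂ)) := by
      rw [hA]
      exact (map_pow (Complex.ofRealHom.mapMatrix) M k).symm
    have h1 : ∑ j, (M ^ k) i0 j * y j ≤ (∑ j, (M ^ k) i0 j) * y jm := by
      rw [Finset.sum_mul]
      exact Finset.sum_le_sum fun j _ => mul_le_mul_of_nonneg_left (hjm j (Finset.mem_univ j))
        (PF.pow_entry_nonneg hM0 k i0 j)
    have h2 : s ^ k * y i0 ≤ ∑ j, (M ^ k) i0 j * y j :=
      PF.pow_mulVec_ge hM0 (fun i => (hy i).le) hs0.le hsub k i0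
    have h3 : (∑ j, (M ^ k) i0 j) ≤ ‖A ^ k‖ := by
      rw [hApow, Matrix.linfty_opNorm_def]
      have h4 : (∑ j, nnnorm ((M ^ k).map (fun x => (x : ℂ)) i0 j))
          ≤ (Finset.univ.sup fun i => ∑ j, nnnorm ((M ^ k).map (fun x => (x : ℂ)) i j)) :=
        Finset.le_sup (f := fun i => ∑ j, nnnorm ((M ^ k).map (fun x => (x : ℂ)) i j))
          (Finset.mem_univ i0)
      have h5 : ((∑ j, nnnorm ((M ^ k).map (fun x => (x : ℂ)) i0 j) : NNReal) : ℝ)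
          = ∑ j, (M ^ k) i0 j := by
        rw [NNReal.coe_sum]
        refine Finset.sum_congr rfl fun j _ => ?_
        rw [coe_nnnorm, Matrix.map_apply, Complex.norm_real, Real.norm_eq_abs,
          abs_of_nonneg (PF.pow_entry_nonneg hM0 k i0 j)]
      rw [← h5]
      exact_mod_cast h4
    calc c * s ^ k = (s ^ k * y i0) / y jm := by rw [hc]; ring
    _ ≤ (∑ j, (M ^ k) i0 j * y j) / y jm := (div_le_div_iff_of_pos_right (hy jm)).mpr h2
    _ ≤ ((∑ j, (M ^ k) i0 j) * y jm) / y jm := (div_le_div_iff_of_pos_right (hy jm)).mpr h1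
    _ = ∑ j, (M ^ k) i0 j := mul_div_cancel_right₀ _ (hy jm).ne'
    _ ≤ ‖A ^ k‖ := h3
  -- Gelfand endgame
  have hT := spectrum.pow_nnnorm_pow_one_div_tendsto_nhds_spectralRadius A
  have hsr : spectralRadius ℂ A = ENNReal.ofReal ρ := by
    rw [hA]; exact PF.spectralRadius_eq hn M
  have hlt : spectralRadius ℂ A < ENNReal.ofReal s' := by
    rw [hsr]
    exact (ENNReal.ofReal_lt_ofReal_iff hs'0).mpr hρs'
  have hev1 : ∀ᶠ k : ℕ in Filter.atTop,
      ((nnnorm (A ^ k) : NNReal) : ENNReal) ^ (1 / (k : ℝ)) < ENNReal.ofReal s' :=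
    hT.eventually_lt_const hlt
  have hev2 : ∀ᶠ k : ℕ in Filter.atTop, (s' / s) ^ k < c := by
    have h0 : 0 ≤ s' / s := (div_pos hs'0 hs0).le
    have h1 : s' / s < 1 := (div_lt_one hs0).mpr hs's
    exact (tendsto_pow_atTop_nhds_zero_of_lt_one h0 h1).eventually_lt_const hc0
  obtain ⟨k, hk, hkge⟩ := ((hev1.and hev2).and (Filter.eventually_ge_atTop 1)).exists
  obtain ⟨hk1, hk2⟩ := hk
  have hkR : (0 : ℝ) < (k : ℝ) := by exact_mod_cast hkge
  have e3 : ‖A ^ k‖ < s' ^ k := by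
    have h := ENNReal.rpow_lt_rpow hk1 hkR
    rw [← ENNReal.rpow_mul, one_div_mul_cancel hkR.ne', ENNReal.rpow_one] at h
    rw [← enorm_eq_nnnorm, ← ofReal_norm, ENNReal.ofReal_rpow_of_pos hs'0,
      Real.rpow_natCast] at h
    exact (ENNReal.ofReal_lt_ofReal_iff (pow_pos hs'0 k)).mp h
  have e4 : c * s ^ k < s' ^ k := lt_of_le_of_lt (hgrow k) e3
  have e5 : c < (s' / s) ^ k := by
    rw [div_pow]
    exact (lt_div_iff₀ (pow_pos hs0 k)).mpr e4
  exact absurd e5 (not_lt.mpr hk2.le)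

lemma PF.sum_mulVec {n : ℕ} (s : Finset ℕ) (f : ℕ → Matrix (Fin n) (Fin n) ℝ)
    (v : Fin n → ℝ) (i : Fin n) :
    (∑ k ∈ s, f k).mulVec v i = ∑ k ∈ s, (f k).mulVec v i := by
  simp only [Matrix.mulVec, dotProduct, Finset.sum_apply, Matrix.sum_apply, Finset.sum_mul]
  rw [Finset.sum_comm]

lemma PF.perron {n : ℕ} (hn : 1 ≤ n) {M : Matrix (Fin n) (Fin n) ℝ}
    (hM0 : ∀ i j, 0 ≤ M i j) (hirr : ∀ i j, ∃ k, 1 ≤ k ∧ 0 < (M ^ k) i j) :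
    0 < specRad M ∧ ∃ w : Fin n → ℝ, (∀ i, 0 < w i) ∧
      M.mulVec w = specRad M • w := by
  haveI : Nonempty (Fin n) := ⟨⟨0, hn⟩⟩
  choose kk hkk1 hkk2 using hirr
  set ρ := specRad M with hρdef
  have hρ0 : 0 ≤ ρ := PF.specRad_nonneg hn M
  obtain ⟨⟨μ, hμ, hμabs⟩, hub⟩ := PF.specRad_spec hn M
  obtain ⟨w, hw0, hwne, hsub⟩ := PF.exists_subinvariant hM0 hμ
  rw [hμabs] at hsub
  obtain ⟨j0, hj0⟩ : ∃ j, 0 < w j := by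
    by_contra h
    push_neg at h
    exact hwne (funext fun i => le_antisymm (h i) (hw0 i))
  have hposk : ∀ (z : Fin n → ℝ), (∀ t, 0 ≤ z t) → ∀ j, 0 < z j → ∀ i k,
      0 < (M ^ k) i j → 0 < (M ^ k).mulVec z i := by
    intro z hz j hj i k hk
    refine Finset.sum_pos' (fun t _ => mul_nonneg (PF.pow_entry_nonneg hM0 k i t) (hz t))
      ⟨j, Finset.mem_univ j, mul_pos hk hj⟩
  set z : Fin n → ℝ := fun i => M.mulVec w i - ρ * w i with hzdef
  have hz0 : ∀ i, 0 ≤ z i := fun i => sub_nonneg.mpr (hsub i)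
  by_cases hzz : z = 0
  · -- eigenvector case
    have heig : M.mulVec w = ρ • w := by
      funext i
      have := congrFun hzz i
      simp only [hzdef, Pi.zero_apply] at this
      have h2 : M.mulVec w i = ρ * w i := by linarith
      simpa [Pi.smul_apply, smul_eq_mul] using h2
    have hiter : ∀ k i, (M ^ k).mulVec w i = ρ ^ k * w i := by
      intro k
      induction k with
      | zero => intro i; simp [Matrix.one_mulVec]
      | succ k ih =>
        intro i
        have h1 : (M ^ (k + 1)).mulVec w = M.mulVec ((M ^ k).mulVec w) := by
          rw [pow_succ', ← Matrix.mulVec_mulVec]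
        have h2 : (M ^ k).mulVec w = fun j => ρ ^ k * w j := funext ih
        rw [h1, h2]
        have h3 : M.mulVec (fun j => ρ ^ k * w j) i = ρ ^ k * M.mulVec w i := by
          simp only [Matrix.mulVec, dotProduct, Finset.mul_sum]
          exact Finset.sum_congr rfl fun j _ => by ring
        rw [h3, heig]
        simp only [Pi.smul_apply, smul_eq_mul]
        ring
    have hρpos : 0 < ρ := by
      rcases lt_or_eq_of_le hρ0 with h | h
      · exact h
      · exfalso
        have hpos := hposk w hw0 j0 hj0 j0 (kk j0 j0) (hkk2 j0 j0)
        rw [hiter (kk j0 j0) j0, ← h,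
          zero_pow (by have := hkk1 j0 j0; omega : kk j0 j0 ≠ 0), zero_mul] at hpos
        exact lt_irrefl 0 hpos
    refine ⟨hρpos, w, ?_, heig⟩
    intro i
    have hpos := hposk w hw0 j0 hj0 i (kk i j0) (hkk2 i j0)
    rw [hiter (kk i j0) i] at hpos
    have hpk := pow_pos hρpos (kk i j0)
    nlinarith [hpos, hpk]
  · exfalso
    obtain ⟨j1, hj1⟩ : ∃ j, 0 < z j := by
      by_contra h
      push_neg at h
      exact hzz (funext fun i => le_antisymm (h i) (hz0 i))
    set K : ℕ := Finset.univ.sup (fun p : Fin n × Fin n => kk p.1 p.2) with hK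
    have hkkK : ∀ i j, kk i j ∈ Finset.Icc 1 K := by
      intro i j
      refine Finset.mem_Icc.mpr ⟨hkk1 i j, ?_⟩
      exact Finset.le_sup (f := fun p : Fin n × Fin n => kk p.1 p.2) (Finset.mem_univ (i, j))
    set P : Matrix (Fin n) (Fin n) ℝ := ∑ k ∈ Finset.Icc 1 K, M ^ k with hP
    have hPmul : ∀ (v : Fin n → ℝ) i, P.mulVec v i = ∑ k ∈ Finset.Icc 1 K, (M ^ k).mulVec v i :=
      fun v i => PF.sum_mulVec _ _ v i
    have hPpos : ∀ (v : Fin n → ℝ), (∀ t, 0 ≤ v t) → ∀ j, 0 < v j → ∀ i, 0 < P.mulVec v i := by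
      intro v hv j hj i
      rw [hPmul]
      refine Finset.sum_pos' (fun k _ => ?_) ⟨kk i j, hkkK i j, hposk v hv j hj i _ (hkk2 i j)⟩
      have he : (M ^ k).mulVec v i = ∑ t, (M ^ k) i t * v t := rfl
      rw [he]
      exact Finset.sum_nonneg fun t _ => mul_nonneg (PF.pow_entry_nonneg hM0 k i t) (hv t)
    set y : Fin n → ℝ := P.mulVec w with hy
    have hypos : ∀ i, 0 < y i := hPpos w hw0 j0 hj0
    have hcomm : M * P = P * M := by
      rw [hP, Finset.mul_sum, Finset.sum_mul]
      exact Finset.sum_congr rfl fun k _ => (pow_mul_comm' M k).symm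
    have hMy : ∀ i, M.mulVec y i - ρ * y i = P.mulVec z i := by
      intro i
      have h1 : M.mulVec y = P.mulVec (M.mulVec w) := by
        rw [hy, Matrix.mulVec_mulVec, hcomm, ← Matrix.mulVec_mulVec]
      have hz' : z = M.mulVec w - ρ • w := by
        funext t
        simp [hzdef]
      have h3 : P.mulVec z = P.mulVec (M.mulVec w) - ρ • P.mulVec w := by
        rw [hz', Matrix.mulVec_sub, Matrix.mulVec_smul]
      have h3i : P.mulVec z i = P.mulVec (M.mulVec w) i - ρ * P.mulVec w i := by
        rw [h3]; simp
      rw [h3i, ← h1, hy]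
    have hstrict : ∀ i, ρ * y i < M.mulVec y i := by
      intro i
      have h1 := hPpos z hz0 j1 hj1 i
      have h2 := hMy i
      linarith
    obtain ⟨imin, -, himin⟩ := Finset.exists_min_image Finset.univ
      (fun i => M.mulVec y i / y i) ⟨⟨0, hn⟩, Finset.mem_univ _⟩
    set s : ℝ := M.mulVec y imin / y imin with hs
    have hρs : ρ < s := (lt_div_iff₀ (hypos imin)).mpr (hstrict imin)
    have hsubs : ∀ i, s * y i ≤ M.mulVec y i := by
      intro i
      have h1 := himin i (Finset.mem_univ i)
      calc s * y i ≤ (M.mulVec y i / y i) * y i :=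
        mul_le_mul_of_nonneg_right h1 (hypos i).le
      _ = M.mulVec y i := div_mul_cancel₀ _ (hypos i).ne'
    exact PF.no_supercritical_vector hn hM0 hypos hρs hsubs

section ModMatLemmas

variable {n : ℕ} (M : Matrix (Fin n) (Fin n) ℝ) (l m : Fin n) (α 𝓛 θ : ℝ)

lemma PF.modMat_zero_zero : modMat M l m α 𝓛 θ 0 0 = 0 := by
  simp [modMat, (Fin.succ_ne_zero m).symm]

lemma PF.modMat_zero_succ (j : Fin n) :
    modMat M l m α 𝓛 θ 0 j.succ = if j = m then α else 0 := by
  simp [modMat, Fin.succ_inj]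

lemma PF.modMat_succ_zero (i : Fin n) :
    modMat M l m α 𝓛 θ i.succ 0 = if i = l then θ else 0 := by
  simp [modMat, Fin.succ_ne_zero, Fin.succ_inj]

lemma PF.modMat_succ_succ (i j : Fin n) :
    modMat M l m α 𝓛 θ i.succ j.succ = if i = l ∧ j = m then 𝓛 else M i j := by
  simp [modMat, Fin.succ_ne_zero, Fin.succ_inj, Fin.pred_succ]

end ModMatLemmas

/-- For a nonnegative irreducible `M` and `θ = ρ(M)`: `ρ(M)` is an eigenvalue of the
modified matrix `M_{ρ(M)}`, and `ρ(M_{ρ(M)}) = ρ(M)`. -/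
theorem specRad_modMat_at_specRad
    {n : ℕ} (hn : 1 ≤ n) (M : Matrix (Fin n) (Fin n) ℝ)
    (hM0 : ∀ i j, 0 ≤ M i j)
    (hirr : ∀ i j, ∃ k, 1 ≤ k ∧ 0 < (M ^ k) i j)
    (l m : Fin n) (α 𝓛 : ℝ) (hα : 0 < α) (h𝓛 : 0 ≤ 𝓛) (hsum : α + 𝓛 = M l m) :
    (modMat M l m α 𝓛 (specRad M) -
        specRad M • (1 : Matrix (Fin (n + 1)) (Fin (n + 1)) ℝ)).det = 0 ∧
      specRad (modMat M l m α 𝓛 (specRad M)) = specRad M := by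
  obtain ⟨hρpos, w, hwpos, hweig⟩ := PF.perron hn hM0 hirr
  set ρ := specRad M with hρdef
  set N1 := modMat M l m α 𝓛 ρ with hN1def
  -- the positive eigenvector of N1
  set w' : Fin (n + 1) → ℝ := Fin.cases (α * w m / ρ) w with hw'def
  have hw'0 : w' 0 = α * w m / ρ := rfl
  have hw's : ∀ i : Fin n, w' i.succ = w i := fun i => by simp [hw'def]
  have hw'pos : ∀ i, 0 < w' i := by
    intro i
    induction i using Fin.cases with
    | zero => rw [hw'0]; exact div_pos (mul_pos hα (hwpos m)) hρpos
    | succ i => rw [hw's]; exact hwpos i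
  -- N1 is entrywise nonnegative
  have hN0 : ∀ i j, 0 ≤ N1 i j := by
    intro i j
    induction i using Fin.cases with
    | zero =>
      induction j using Fin.cases with
      | zero => rw [hN1def, PF.modMat_zero_zero]
      | succ j =>
        rw [hN1def, PF.modMat_zero_succ]
        split
        · exact hα.le
        · exact le_rfl
    | succ i =>
      induction j using Fin.cases with
      | zero =>
        rw [hN1def, PF.modMat_succ_zero]
        split
        · exact hρpos.le
        · exact le_rfl
      | succ j =>
        rw [hN1def, PF.modMat_succ_succ]
        split
        · exact h𝓛
        · exact hM0 i j
  -- eigen equation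
  have hNw : N1.mulVec w' = ρ • w' := by
    funext i
    induction i using Fin.cases with
    | zero =>
      have h1 : N1.mulVec w' 0 = N1 0 0 * w' 0 + ∑ j : Fin n, N1 0 j.succ * w' j.succ :=
        Fin.sum_univ_succ _
      rw [h1, hN1def, PF.modMat_zero_zero, zero_mul, zero_add]
      have h2 : ∀ j : Fin n, modMat M l m α 𝓛 ρ 0 j.succ * w' j.succ
          = if j = m then α * w j else 0 := by
        intro j
        rw [PF.modMat_zero_succ, hw's]
        split <;> simp_all
      simp only [h2]
      rw [Finset.sum_ite_eq' Finset.univ m fun j => α * w j]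
      simp only [Finset.mem_univ, if_true, Pi.smul_apply, smul_eq_mul, hw'0]
      field_simp
    | succ i =>
      have h1 : N1.mulVec w' i.succ
          = N1 i.succ 0 * w' 0 + ∑ j : Fin n, N1 i.succ j.succ * w' j.succ :=
        Fin.sum_univ_succ _
      rw [h1, hN1def, PF.modMat_succ_zero]
      have h3 : ∑ j, M i j * w j = ρ * w i := by
        have := congrFun hweig i
        simpa [Matrix.mulVec, dotProduct] using this
      by_cases hi : i = l
      · have h2 : ∀ j : Fin n, modMat M l m α 𝓛 ρ i.succ j.succ * w' j.succ
            = M i j * w j + (if j = m then (𝓛 - M i m) * w m else 0) := by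
          intro j
          rw [PF.modMat_succ_succ, hw's]
          by_cases h : j = m
          · subst h
            rw [if_pos ⟨hi, rfl⟩, if_pos rfl]
            ring
          · rw [if_neg (by tauto), if_neg h]
            ring
        simp only [h2, Finset.sum_add_distrib]
        rw [Finset.sum_ite_eq' Finset.univ m fun _ => (𝓛 - M i m) * w m]
        rw [if_pos hi]
        simp only [Finset.mem_univ, if_true, h3, hw'0, Pi.smul_apply, smul_eq_mul, hw's]
        have h𝓛M : 𝓛 - M i m = -α := by
          have : M i m = M l m := by rw [hi]
          linarith [hsum, this]
        rw [h𝓛M]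
        field_simp
        ring
      · have h2 : ∀ j : Fin n, modMat M l m α 𝓛 ρ i.succ j.succ * w' j.succ
            = M i j * w j := by
          intro j
          rw [PF.modMat_succ_succ, hw's]
          rw [if_neg (by tauto)]
        simp only [h2]
        rw [if_neg hi, zero_mul, zero_add, h3]
        simp [hw's]
  -- determinant statement
  have hw'ne : w' ≠ 0 := by
    intro h
    have := hw'pos 0
    rw [h] at this
    exact lt_irrefl 0 this
  constructor
  · refine Matrix.exists_mulVec_eq_zero_iff.mp ⟨w', hw'ne, ?_⟩
    rw [Matrix.sub_mulVec, Matrix.smul_mulVec, Matrix.one_mulVec, hNw, sub_self]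
  · -- spectral radius of N1
    have hρmem : (ρ : ℂ) ∈ spectrum ℂ (N1.map (fun x => (x : ℂ))) := by
      rw [PF.mem_spectrum_iff]
      refine ⟨fun i => (w' i : ℂ), ?_, ?_⟩
      · intro h
        have := congrFun h 0
        simp only [Pi.zero_apply, Complex.ofReal_eq_zero] at this
        exact (hw'pos 0).ne' this
      · rw [PF.map_mulVec_real]
        funext i
        rw [hNw]
        simp
    have hub : ∀ μ ∈ spectrum ℂ (N1.map (fun x => (x : ℂ))), ‖μ‖ ≤ ρ :=
      fun μ hμ => PF.abs_le_of_pos_eigenvector hN0 hw'pos hNw hμ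
    have hρS : ρ ∈ (fun μ => ‖μ‖) '' spectrum ℂ (N1.map (fun x => (x : ℂ))) :=
      ⟨(ρ : ℂ), hρmem, by simp [abs_of_pos hρpos]⟩
    apply le_antisymm
    · refine csSup_le ⟨ρ, hρS⟩ ?_
      rintro x ⟨μ, hμ, rfl⟩
      exact hub μ hμ
    · exact le_csSup ⟨ρ, by rintro x ⟨μ, hμ, rfl⟩; exact hub μ hμ⟩ hρS
end
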